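/- arXiv:2010.06919 — 3 statements merged into one kernel-verified Lean document; each statement's English description precedes it below -/
import Mathlib

section
/- Let 0 < δ < 1, f ∈ L²(I), and c ∈ L^∞(I) with c(x) ≥ c_min > 0 on I, and let u_δ ∈ H²(I) be the solution of −δ²u_δ'' + c u_δ = f on I with u_δ(0) = u_δ(1) = 0. Then there exists C > 0, independent of δ and f, such that δ²‖u_δ‖_{H²(I)} + δ‖u_δ‖_{H¹(I)} + ‖u_δ‖_{L²(I)} ≤ C ‖f‖_{L²(I)}. -/
open MeasureTheory Set Polynomial

/-! Common definitions: Lebesgue/Sobolev norms on `I = (0,1)`, finite element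
spaces on the uniform dyadic grid `T_L`, the singularly perturbed problem
`-δ²u'' + cu = f`, and (Q)TT decompositions of vectors in `ℝ^{2^L}`. -/

/-- Squared `L²(0,1)` norm. -/
noncomputable def L2sq (v : ℝ → ℝ) : ℝ := ∫ x in Ioo (0:ℝ) 1, (v x)^2

/-- `L²(0,1)` norm. -/
noncomputable def L2norm (v : ℝ → ℝ) : ℝ := Real.sqrt (L2sq v)

/-- `H¹(0,1)` norm of a function `v` with derivative `v'`. -/
noncomputable def H1norm (v v' : ℝ → ℝ) : ℝ := Real.sqrt (L2sq v + L2sq v')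

/-- `H²(0,1)` norm of a function `v` with derivatives `v'`, `v''`. -/
noncomputable def H2norm (v v' v'' : ℝ → ℝ) : ℝ := Real.sqrt (L2sq v + L2sq v' + L2sq v'')

/-- Energy norm `‖v‖_δ = (δ²‖v'‖² + ‖v‖²)^(1/2)`. -/
noncomputable def energyNorm (δ : ℝ) (v v' : ℝ → ℝ) : ℝ := Real.sqrt (δ^2 * L2sq v' + L2sq v)

/-- Membership in `L²(0,1)`. -/
def MemL2 (v : ℝ → ℝ) : Prop := IntegrableOn (fun x => (v x)^2) (Ioo (0:ℝ) 1)

/-- `v ∈ H¹(0,1)` with (weak) derivative `v'`: `v` is absolutely continuous on `[0,1]`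
(the fundamental theorem of calculus holds with density `v'`) and `v, v' ∈ L²(0,1)`. -/
def IsH1 (v v' : ℝ → ℝ) : Prop :=
  (∀ x ∈ Icc (0:ℝ) 1, v x = v 0 + ∫ t in (0:ℝ)..x, v' t) ∧
  ContinuousOn v (Icc (0:ℝ) 1) ∧ MemL2 v ∧ MemL2 v'

/-- `v ∈ H²(0,1)` with derivatives `v'` and `v''`. -/
def IsH2 (v v' v'' : ℝ → ℝ) : Prop := IsH1 v v' ∧ IsH1 v' v''

/-- The bilinear form `a_δ(u,v) = ∫_I (δ² u'v' + c u v)`. -/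
noncomputable def aForm (δ : ℝ) (c : ℝ → ℝ) (u u' v v' : ℝ → ℝ) : ℝ :=
  ∫ x in Ioo (0:ℝ) 1, (δ^2 * u' x * v' x + c x * u x * v x)

/-- Mesh width `h = 1/(2^L+1)` of the uniform grid `T_L`. -/
noncomputable def gridh (L : ℕ) : ℝ := 1 / (2^L + 1)

/-- Continuous, piecewise affine functions on the uniform grid `T_L`
with nodes `x_j = j·h`, `j = 0,…,2^L+1`. -/
def PL (L : ℕ) (w : ℝ → ℝ) : Prop :=
  ContinuousOn w (Icc (0:ℝ) 1) ∧
  ∀ j : ℕ, j < 2^L + 1 →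
    ∃ a b : ℝ, ∀ x ∈ Icc ((j:ℝ) * gridh L) (((j:ℝ)+1) * gridh L), w x = a * x + b

/-- `V^L₀`: continuous piecewise affine on `T_L`, vanishing at the endpoints. -/
def PL0 (L : ℕ) (w : ℝ → ℝ) : Prop := PL L w ∧ w 0 = 0 ∧ w 1 = 0

/-- `V^L` with boundary values `α₀`, `α₁`. -/
def MemVL (L : ℕ) (α₀ α₁ : ℝ) (w : ℝ → ℝ) : Prop := PL L w ∧ w 0 = α₀ ∧ w 1 = α₁

/-- The Lagrange hat function at node `x_i = i·h` of the grid `T_L`. -/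
noncomputable def hat (L : ℕ) (i : ℕ) (x : ℝ) : ℝ :=
  max 0 (1 - |x - (i:ℝ) * gridh L| / gridh L)

/-- Membership in `V(I, p, T^hp_κ)`: continuous on `[0,1]`, a polynomial of degree `≤ p`
on each of the three subintervals of the grid `{0, min(1/4,κ), 1-min(1/4,κ), 1}`,
with boundary values `α₀`, `α₁`. -/
def MemVhp (p : ℕ) (κ α₀ α₁ : ℝ) (v : ℝ → ℝ) : Prop :=
  ContinuousOn v (Icc (0:ℝ) 1) ∧ v 0 = α₀ ∧ v 1 = α₁ ∧
  ∃ P₁ P₂ P₃ : Polynomial ℝ,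
    P₁.natDegree ≤ p ∧ P₂.natDegree ≤ p ∧ P₃.natDegree ≤ p ∧
    (∀ x ∈ Icc (0:ℝ) (min (1/4) κ), v x = P₁.eval x) ∧
    (∀ x ∈ Icc (min (1/4) κ) (1 - min (1/4) κ), v x = P₂.eval x) ∧
    (∀ x ∈ Icc (1 - min (1/4) κ) 1, v x = P₃.eval x)

/-- Weak solution `u ∈ H¹(0,1)` (with weak derivative `u'`) of
`-δ²u'' + cu = f` in `(0,1)`, `u(0) = α₀`, `u(1) = α₁`. -/
def WeakSol (δ : ℝ) (c f : ℝ → ℝ) (α₀ α₁ : ℝ) (u u' : ℝ → ℝ) : Prop :=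
  IsH1 u u' ∧ u 0 = α₀ ∧ u 1 = α₁ ∧
  ∀ v v' : ℝ → ℝ, IsH1 v v' → v 0 = 0 → v 1 = 0 →
    aForm δ c u u' v v' = ∫ x in Ioo (0:ℝ) 1, f x * v x

/-- Strong solution `u ∈ H²(0,1)` with homogeneous Dirichlet boundary conditions:
`-δ²u'' + c u = f` a.e. in `(0,1)`, `u(0)=u(1)=0`. -/
def StrongSol0 (δ : ℝ) (c f : ℝ → ℝ) (u u' u'' : ℝ → ℝ) : Prop :=
  IsH2 u u' u'' ∧ u 0 = 0 ∧ u 1 = 0 ∧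
  ∀ᵐ x ∂(volume.restrict (Ioo (0:ℝ) 1)), -δ^2 * u'' x + c x * u x = f x

/-- `Pv` (with derivative `Pv'`) is the Galerkin projection of `v` (with derivative `v'`)
onto `V^L₀`: `Pv ∈ V^L₀` and `a_δ(Pv - v, w) = 0` for all `w ∈ V^L₀`. -/
def IsGalerkin0 (δ : ℝ) (c : ℝ → ℝ) (L : ℕ) (v v' Pv Pv' : ℝ → ℝ) : Prop :=
  PL0 L Pv ∧ IsH1 Pv Pv' ∧
  ∀ w w' : ℝ → ℝ, PL0 L w → IsH1 w w' →
    aForm δ c (fun x => Pv x - v x) (fun x => Pv' x - v' x) w w' = 0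

/-- The `K`-functional between `L²(0,1)` and `H¹₀(0,1)`:
`K(t,v) = inf {‖v₀‖_{L²} + t‖v₁‖_{H¹} : v = v₀ + v₁, v₀ ∈ L², v₁ ∈ H¹₀}`. -/
noncomputable def Kfun (t : ℝ) (v : ℝ → ℝ) : ℝ :=
  sInf {s : ℝ | ∃ v₀ v₁ v₁' : ℝ → ℝ, (∀ x, v x = v₀ x + v₁ x) ∧ MemL2 v₀ ∧
    IsH1 v₁ v₁' ∧ v₁ 0 = 0 ∧ v₁ 1 = 0 ∧ s = L2norm v₀ + t * H1norm v₁ v₁'}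

/-- The set `{K(t,v)/√t : t > 0}` over which the `H^{1/2,∞}` norm is taken. -/
def HhalfSet (v : ℝ → ℝ) : Set ℝ := {s : ℝ | ∃ t : ℝ, 0 < t ∧ s = Kfun t v / Real.sqrt t}

/-- The interpolation norm `‖v‖_{1/2,∞} = sup_{t>0} K(t,v)/t^{1/2}`. -/
noncomputable def HhalfNorm (v : ℝ → ℝ) : ℝ := sSup (HhalfSet v)

/-- `v ∈ H^{1/2,∞}(0,1)`: the sup defining `‖v‖_{1/2,∞}` is finite. -/
def MemHhalf (v : ℝ → ℝ) : Prop := BddAbove (HhalfSet v)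

/-- Partial products `V¹(i₁)⋯Vⁿ(iₙ)` of TT-cores. -/
def qttEntry {rk : ℕ → ℕ}
    (V : ∀ j : ℕ, Fin 2 → Matrix (Fin (rk j)) (Fin (rk (j+1))) ℝ) :
    (n : ℕ) → (Fin n → Fin 2) → Matrix (Fin (rk 0)) (Fin (rk n)) ℝ
  | 0, _ => 1
  | n+1, i => qttEntry V n (fun j => i j.castSucc) * V n (i (Fin.last n))

/-- The binary digits `i_1,…,i_L` of an index `i = Σ_{j=1}^L 2^{L-j} i_j`. -/
def bits (L : ℕ) (i : ℕ) : Fin L → Fin 2 :=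
  fun j => ⟨i / 2^(L - 1 - (j:ℕ)) % 2, Nat.mod_lt _ (by norm_num)⟩

/-- `u ∈ ℝ^{2^L}` admits a QTT decomposition with rank sequence `rk`
(`rk 0 = rk L = 1`): `u(i) = V¹(i₁)⋯V^L(i_L)` for all indices `i`. -/
def HasQTTRanks (L : ℕ) (u : Fin (2^L) → ℝ) (rk : ℕ → ℕ) : Prop :=
  rk 0 = 1 ∧ rk L = 1 ∧
  ∃ V : ∀ j : ℕ, Fin 2 → Matrix (Fin (rk j)) (Fin (rk (j+1))) ℝ,
    ∀ (i : Fin (2^L)) (a : Fin (rk 0)) (b : Fin (rk L)),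
      u i = qttEntry V L (bits L (i:ℕ)) a b

/-- `u ∈ ℝ^{2^L}` admits a QTT decomposition with all ranks `r_1,…,r_{L-1}` bounded by `r`. -/
def HasQTT (L : ℕ) (u : Fin (2^L) → ℝ) (r : ℕ) : Prop :=
  ∃ rk : ℕ → ℕ, HasQTTRanks L u rk ∧ ∀ j : ℕ, 0 < j → j < L → rk j ≤ r

/-- Number of parameters `Σ_{j=1}^L r_{j-1}·2·r_j` of a QTT decomposition with ranks `rk`. -/
def Ndof (L : ℕ) (rk : ℕ → ℕ) : ℕ := ∑ j ∈ Finset.range L, rk j * 2 * rk (j+1)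

/-- Partial products of matrix (operator) TT-cores. -/
def qttEntryM {rk : ℕ → ℕ}
    (V : ∀ j : ℕ, Fin 2 → Fin 2 → Matrix (Fin (rk j)) (Fin (rk (j+1))) ℝ) :
    (n : ℕ) → (Fin n → Fin 2) → (Fin n → Fin 2) → Matrix (Fin (rk 0)) (Fin (rk n)) ℝ
  | 0, _, _ => 1
  | n+1, i, m =>
      qttEntryM V n (fun j => i j.castSucc) (fun j => m j.castSucc) *
        V n (i (Fin.last n)) (m (Fin.last n))

/-- A matrix `A ∈ ℝ^{2^L × 2^L}` admits a matrix QTT decomposition with rank sequence `rk`: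
`A(i,m) = V¹(i₁,m₁)⋯V^L(i_L,m_L)`. -/
def HasMatrixQTTRanks (L : ℕ) (A : Matrix (Fin (2^L)) (Fin (2^L)) ℝ) (rk : ℕ → ℕ) : Prop :=
  rk 0 = 1 ∧ rk L = 1 ∧
  ∃ V : ∀ j : ℕ, Fin 2 → Fin 2 → Matrix (Fin (rk j)) (Fin (rk (j+1))) ℝ,
    ∀ (i m : Fin (2^L)) (a : Fin (rk 0)) (b : Fin (rk L)),
      A i m = qttEntryM V L (bits L (i:ℕ)) (bits L (m:ℕ)) a b

lemma my_L2sq_nonneg (v : ℝ → ℝ) : 0 ≤ L2sq v :=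
  setIntegral_nonneg measurableSet_Ioo (fun x _ => sq_nonneg _)


lemma my_sqrt_add_le (x y : ℝ) (hx : 0 ≤ x) (hy : 0 ≤ y) :
    Real.sqrt (x + y) ≤ Real.sqrt x + Real.sqrt y := by
  rw [show x + y = Real.sqrt x ^ 2 + Real.sqrt y ^ 2 by
    rw [Real.sq_sqrt hx, Real.sq_sqrt hy]]
  have h1 := Real.sqrt_nonneg x
  have h2 := Real.sqrt_nonneg y
  have h3 : Real.sqrt x ^ 2 + Real.sqrt y ^ 2 ≤ (Real.sqrt x + Real.sqrt y) ^ 2 := by nlinarith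
  calc Real.sqrt (Real.sqrt x ^ 2 + Real.sqrt y ^ 2)
      ≤ Real.sqrt ((Real.sqrt x + Real.sqrt y) ^ 2) := Real.sqrt_le_sqrt h3
    _ = Real.sqrt x + Real.sqrt y := Real.sqrt_sq (by linarith)

lemma my_energy_ibp (u u' u'' : ℝ → ℝ) (b : ℝ) (hb0 : 0 ≤ b) (hb1 : b ≤ 1)
    (hu : ContinuousOn u (Icc (0:ℝ) 1)) (hu' : ContinuousOn u' (Icc (0:ℝ) 1))
    (ftc_u : ∀ x ∈ Icc (0:ℝ) 1, u x = u 0 + ∫ t in (0:ℝ)..x, u' t)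
    (ftc_u' : ∀ x ∈ Icc (0:ℝ) 1, u' x = u' 0 + ∫ t in (0:ℝ)..x, u'' t)
    (hmeas : AEStronglyMeasurable u'' (volume.restrict (Ioo 0 b)))
    (hint2 : IntegrableOn (fun x => (u'' x)^2) (Ioo (0:ℝ) 1))
    (hu0 : u 0 = 0) (hub : u b = 0) :
    ∫ x in Ioo 0 b, u'' x * u x = - ∫ x in Ioo (0:ℝ) b, (u' x)^2 := by
  have hsub : Ioo (0:ℝ) b ⊆ Ioo (0:ℝ) 1 := Ioo_subset_Ioo_right hb1
  have hIccb : Icc (0:ℝ) b ⊆ Icc (0:ℝ) 1 := Icc_subset_Icc_right hb1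
  -- u'' is integrable on (0,b)
  have hIob : IntegrableOn u'' (Ioo 0 b) := by
    refine Integrable.mono' (g := fun x => (1 + (u'' x)^2)/2) ?_ hmeas ?_
    · exact (((integrableOn_const measure_Ioo_lt_top.ne)).add
        (hint2.mono_set hsub)).div_const 2
    · refine Filter.Eventually.of_forall (fun x => ?_)
      rw [Real.norm_eq_abs]
      nlinarith [abs_nonneg (u'' x), sq_abs (u'' x), sq_nonneg (|u'' x| - 1)]
  -- bound for u'
  obtain ⟨M, hM⟩ := isCompact_Icc.exists_bound_of_continuousOn hu'
  have hM0 : 0 ≤ M := le_trans (norm_nonneg _) (hM 0 (by constructor <;> norm_num))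
  -- clamped extension of u'
  set w : ℝ → ℝ := fun t => u' (max 0 (min 1 t)) with hw
  have hclamp : ∀ t, max 0 (min 1 t) ∈ Icc (0:ℝ) 1 :=
    fun t => ⟨le_max_left _ _, max_le (by norm_num) (min_le_left _ _)⟩
  have hwc : Continuous w := by
    refine hu'.comp_continuous (continuous_const.max (continuous_const.min continuous_id)) hclamp
  have hweq : ∀ t ∈ Icc (0:ℝ) 1, w t = u' t := by
    intro t ht
    simp only [hw]
    rw [min_eq_right ht.2, max_eq_right ht.1]
  have hwM : ∀ t, |w t| ≤ M := fun t => by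
    simpa [Real.norm_eq_abs] using hM _ (hclamp t)
  -- interval integrability of u' pieces
  have hu'ii : ∀ p q, p ∈ Icc (0:ℝ) 1 → q ∈ Icc (0:ℝ) 1 → IntervalIntegrable u' volume p q := by
    intro p q hp hq
    apply (hu'.mono ?_).intervalIntegrable
    intro t ht
    rcases le_total p q with h | h
    · rw [uIcc_of_le h] at ht
      exact ⟨le_trans hp.1 ht.1, le_trans ht.2 hq.2⟩
    · rw [uIcc_of_ge h] at ht
      exact ⟨le_trans hq.1 ht.1, le_trans ht.2 hp.2⟩
  have hbI : b ∈ Icc (0:ℝ) 1 := ⟨hb0, hb1⟩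
  have h0I : (0:ℝ) ∈ Icc (0:ℝ) 1 := ⟨le_refl _, by norm_num⟩
  -- the product set
  set T : Set (ℝ × ℝ) := {p : ℝ × ℝ | 0 < p.2 ∧ p.2 < p.1} with hT
  have hTopen : IsOpen T := by
    have h1 : IsOpen {p : ℝ × ℝ | 0 < p.2} := isOpen_lt continuous_const continuous_snd
    have h2 : IsOpen {p : ℝ × ℝ | p.2 < p.1} := isOpen_lt continuous_snd continuous_fst
    rw [hT, Set.setOf_and]
    exact h1.inter h2
  set nu := volume.restrict (Ioo (0:ℝ) b) with hnu
  -- integrability of the kernel on the product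
  have hFint : Integrable (Function.uncurry
      (fun x t => u'' x * T.indicator (fun q : ℝ × ℝ => w q.2) (x, t))) (nu.prod nu) := by
    have hmeasF : AEStronglyMeasurable
        (fun p : ℝ × ℝ => u'' p.1 * T.indicator (fun q : ℝ × ℝ => w q.2) p) (nu.prod nu) := by
      refine AEStronglyMeasurable.mul ?_ ?_
      · exact hmeas.comp_fst
      · exact (((hwc.measurable.comp measurable_snd).indicator
          hTopen.measurableSet).stronglyMeasurable).aestronglyMeasurable
    refine Integrable.mono' (g := fun p : ℝ × ℝ => |u'' p.1| * M) ?_ ?_ ?_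
    · exact Integrable.mul_prod (Integrable.abs hIob) (integrableOn_const measure_Ioo_lt_top.ne)
    · exact hmeasF
    · refine Filter.Eventually.of_forall (fun p => ?_)
      simp only [Function.uncurry, Prod.mk.eta]
      rw [Real.norm_eq_abs, abs_mul]
      refine mul_le_mul_of_nonneg_left ?_ (abs_nonneg _)
      by_cases hp : p ∈ T
      · rw [Set.indicator_of_mem hp]; exact hwM _
      · rw [Set.indicator_of_notMem hp]; simpa using hM0
  have hswap := MeasureTheory.integral_integral_swap hFint
  -- evaluate the left side
  have hL : (∫ (x : ℝ), ∫ (y : ℝ), u'' x * T.indicator (fun q : ℝ × ℝ => w q.2) (x, y) ∂nu ∂nu)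
      = ∫ x in Ioo (0:ℝ) b, u'' x * u x := by
    rw [hnu]
    refine setIntegral_congr_fun measurableSet_Ioo (fun x hx => ?_)
    have hx1 : x ∈ Icc (0:ℝ) 1 := ⟨hx.1.le, le_trans hx.2.le hb1⟩
    have hind : ∀ t : ℝ, T.indicator (fun q : ℝ × ℝ => w q.2) (x, t)
        = (Ioo (0:ℝ) x).indicator w t := by
      intro t
      by_cases h : 0 < t ∧ t < x
      · rw [Set.indicator_of_mem (by exact h : (x,t) ∈ T),
          Set.indicator_of_mem (by exact h : t ∈ Ioo 0 x)]
      · rw [Set.indicator_of_notMem (by exact h : ¬ (x,t) ∈ T),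
          Set.indicator_of_notMem (by simpa [mem_Ioo] using h)]
    simp only [hind]
    rw [integral_const_mul, MeasureTheory.integral_indicator measurableSet_Ioo,
      Measure.restrict_restrict measurableSet_Ioo,
      inter_eq_left.mpr (Ioo_subset_Ioo_right hx.2.le)]
    have : ∫ t in Ioo (0:ℝ) x, w t = ∫ t in Ioo (0:ℝ) x, u' t :=
      setIntegral_congr_fun measurableSet_Ioo (fun t ht =>
        hweq t ⟨ht.1.le, le_trans ht.2.le hx1.2⟩)
    rw [this, ← MeasureTheory.integral_Ioc_eq_integral_Ioo,
      ← intervalIntegral.integral_of_le hx1.1]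
    have := ftc_u x hx1
    rw [hu0, zero_add] at this
    rw [← this]
  -- evaluate the right side
  have hR : (∫ (t : ℝ), ∫ (x : ℝ), u'' x * T.indicator (fun q : ℝ × ℝ => w q.2) (x, t) ∂nu ∂nu)
      = ∫ t in Ioo (0:ℝ) b, (u' b - u' t) * u' t := by
    rw [hnu]
    refine setIntegral_congr_fun measurableSet_Ioo (fun t ht => ?_)
    have ht1 : t ∈ Icc (0:ℝ) 1 := ⟨ht.1.le, le_trans ht.2.le hb1⟩
    have hind : ∀ x : ℝ, u'' x * T.indicator (fun q : ℝ × ℝ => w q.2) (x, t)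
        = (Ioi t).indicator (fun x => u'' x * w t) x := by
      intro x
      by_cases h : t < x
      · rw [Set.indicator_of_mem (by exact ⟨ht.1, h⟩ : (x,t) ∈ T),
          Set.indicator_of_mem (by exact h : x ∈ Ioi t)]
      · rw [Set.indicator_of_notMem (by simp [hT, h] : ¬ (x,t) ∈ T),
          Set.indicator_of_notMem (by simpa using h)]
        simp
    simp only [hind]
    rw [MeasureTheory.integral_indicator measurableSet_Ioi,
      Measure.restrict_restrict measurableSet_Ioi]
    have hset : Ioi t ∩ Ioo 0 b = Ioo t b := by
      ext y
      simp only [mem_inter_iff, mem_Ioi, mem_Ioo]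
      constructor
      · rintro ⟨h1, _, h3⟩; exact ⟨h1, h3⟩
      · rintro ⟨h1, h2⟩; exact ⟨h1, lt_trans ht.1 h1, h2⟩
    rw [hset, MeasureTheory.integral_mul_const]
    have hi1 : IntervalIntegrable u'' volume 0 t := by
      rw [intervalIntegrable_iff_integrableOn_Ioc_of_le ht.1.le]
      rw [integrableOn_Ioc_iff_integrableOn_Ioo]
      exact hIob.mono_set (Ioo_subset_Ioo_right ht.2.le)
    have hi2 : IntervalIntegrable u'' volume t b := by
      rw [intervalIntegrable_iff_integrableOn_Ioc_of_le ht.2.le]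
      rw [integrableOn_Ioc_iff_integrableOn_Ioo]
      exact hIob.mono_set (Ioo_subset_Ioo_left ht.1.le)
    have hadd := intervalIntegral.integral_add_adjacent_intervals hi1 hi2
    have e1 := ftc_u' t ht1
    have e2 := ftc_u' b hbI
    have : ∫ x in Ioo t b, u'' x = u' b - u' t := by
      rw [← MeasureTheory.integral_Ioc_eq_integral_Ioo,
        ← intervalIntegral.integral_of_le ht.2.le]
      rw [e1, e2, ← hadd]
      ring
    rw [this, hweq t ht1]
  rw [hL, hR] at hswap
  rw [hswap]
  -- final computation
  have hint_u' : IntegrableOn u' (Ioo (0:ℝ) b) := by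
    rw [← integrableOn_Ioc_iff_integrableOn_Ioo,
      ← intervalIntegrable_iff_integrableOn_Ioc_of_le hb0]
    exact hu'ii 0 b h0I hbI
  have hint_u'sq : IntegrableOn (fun t => u' t * u' t) (Ioo (0:ℝ) b) := by
    have : IntegrableOn (fun t => u' t * u' t) (Icc (0:ℝ) 1) :=
      (hu'.mul hu').integrableOn_compact isCompact_Icc
    exact this.mono_set (Set.Subset.trans Ioo_subset_Icc_self hIccb)
  have hsplit : ∫ t in Ioo (0:ℝ) b, (u' b - u' t) * u' t
      = u' b * (∫ t in Ioo (0:ℝ) b, u' t) - ∫ t in Ioo (0:ℝ) b, u' t * u' t := by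
    rw [← integral_const_mul, ← MeasureTheory.integral_sub
      (hint_u'.const_mul (u' b)) hint_u'sq]
    refine setIntegral_congr_fun measurableSet_Ioo (fun t _ => by ring)
  have hintu' : ∫ t in Ioo (0:ℝ) b, u' t = 0 := by
    rw [← MeasureTheory.integral_Ioc_eq_integral_Ioo, ← intervalIntegral.integral_of_le hb0]
    have := ftc_u b hbI
    rw [hu0, hub] at this
    linarith
  rw [hsplit, hintu', mul_zero, zero_sub, neg_inj]
  exact setIntegral_congr_fun measurableSet_Ioo (fun t _ => (pow_two (u' t)).symm)

set_option maxHeartbeats 1000000 in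
lemma my_energy_est (δ : ℝ) (c f u u' u'' : ℝ → ℝ) (cmin cmax : ℝ)
    (hcmin : 0 < cmin) (hcmeas : Measurable c)
    (hcl : ∀ x ∈ Icc (0:ℝ) 1, cmin ≤ c x) (hcu : ∀ x ∈ Icc (0:ℝ) 1, c x ≤ cmax)
    (b : ℝ) (hb0 : 0 ≤ b) (hb1 : b ≤ 1)
    (hu : ContinuousOn u (Icc (0:ℝ) 1)) (hu' : ContinuousOn u' (Icc (0:ℝ) 1))
    (ftc_u : ∀ x ∈ Icc (0:ℝ) 1, u x = u 0 + ∫ t in (0:ℝ)..x, u' t)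
    (ftc_u' : ∀ x ∈ Icc (0:ℝ) 1, u' x = u' 0 + ∫ t in (0:ℝ)..x, u'' t)
    (hmeas : AEStronglyMeasurable u'' (volume.restrict (Ioo 0 b)))
    (hu2 : IntegrableOn (fun x => (u x)^2) (Ioo (0:ℝ) 1))
    (hu''2 : IntegrableOn (fun x => (u'' x)^2) (Ioo (0:ℝ) 1))
    (hf2 : IntegrableOn (fun x => (f x)^2) (Ioo (0:ℝ) 1))
    (heq : ∀ᵐ x ∂(volume.restrict (Ioo (0:ℝ) 1)), -δ^2 * u'' x + c x * u x = f x)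
    (hu0 : u 0 = 0) (hub : u b = 0) :
    cmin^2 * (∫ x in Ioo (0:ℝ) b, (u x)^2) ≤ (∫ x in Ioo (0:ℝ) 1, (f x)^2) ∧
    cmin * (δ^2 * ∫ x in Ioo (0:ℝ) b, (u' x)^2) ≤ (∫ x in Ioo (0:ℝ) 1, (f x)^2) := by
  have hsub : Ioo (0:ℝ) b ⊆ Ioo (0:ℝ) 1 := Ioo_subset_Ioo_right hb1
  have hsubI : Ioo (0:ℝ) b ⊆ Icc (0:ℝ) 1 := fun x hx => ⟨hx.1.le, le_trans hx.2.le hb1⟩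
  have hIBP := my_energy_ibp u u' u'' b hb0 hb1 hu hu' ftc_u ftc_u' hmeas hu''2 hu0 hub
  have hIob : IntegrableOn u'' (Ioo 0 b) := by
    refine Integrable.mono' (g := fun x => (1 + (u'' x)^2)/2) ?_ hmeas ?_
    · exact (((integrableOn_const measure_Ioo_lt_top.ne)).add
        (hu''2.mono_set hsub)).div_const 2
    · refine Filter.Eventually.of_forall (fun x => ?_)
      rw [Real.norm_eq_abs]
      nlinarith [abs_nonneg (u'' x), sq_abs (u'' x), sq_nonneg (|u'' x| - 1)]
  have heqI : ∀ᵐ x ∂(volume.restrict (Ioo (0:ℝ) b)), -δ^2 * u'' x + c x * u x = f x :=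
    ae_restrict_of_ae_restrict_of_subset hsub heq
  obtain ⟨Mu, hMu⟩ := isCompact_Icc.exists_bound_of_continuousOn hu
  have hMu0 : 0 ≤ Mu := le_trans (norm_nonneg _) (hMu 0 ⟨le_refl _, by norm_num⟩)
  have hU2 : IntegrableOn (fun x => (u x)^2) (Ioo (0:ℝ) b) := hu2.mono_set hsub
  have hF2I : IntegrableOn (fun x => (f x)^2) (Ioo (0:ℝ) b) := hf2.mono_set hsub
  have hu_meas : AEStronglyMeasurable u (volume.restrict (Ioo (0:ℝ) b)) :=
    (hu.mono hsubI).aestronglyMeasurable measurableSet_Ioo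
  have hcmax' : ∀ x ∈ Ioo (0:ℝ) b, |c x| ≤ cmax := by
    intro x hx
    rw [abs_of_pos (lt_of_lt_of_le hcmin (hcl x (hsubI hx)))]
    exact hcu x (hsubI hx)
  have hcuu_int : IntegrableOn (fun x => c x * u x * u x) (Ioo (0:ℝ) b) := by
    refine Integrable.mono' (g := fun x => cmax * (u x)^2) (hU2.const_mul cmax)
      ((hcmeas.aestronglyMeasurable.mul hu_meas).mul hu_meas) ?_
    filter_upwards [ae_restrict_mem measurableSet_Ioo] with x hx
    rw [Real.norm_eq_abs, abs_mul, abs_mul]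
    have h1 := hcmax' x hx
    have h2 : |u x| * |u x| = (u x)^2 := by rw [abs_mul_abs_self, ← pow_two]
    nlinarith [abs_nonneg (c x), abs_nonneg (u x), sq_nonneg (u x)]
  have hu''u_int : IntegrableOn (fun x => u'' x * u x) (Ioo (0:ℝ) b) := by
    refine Integrable.mono' (g := fun x => Mu * |u'' x|) ((hIob.abs).const_mul Mu)
      (hmeas.mul hu_meas) ?_
    filter_upwards [ae_restrict_mem measurableSet_Ioo] with x hx
    rw [Real.norm_eq_abs, abs_mul, mul_comm]
    refine mul_le_mul_of_nonneg_right ?_ (abs_nonneg _)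
    simpa [Real.norm_eq_abs] using hMu x (hsubI hx)
  have hg_int : IntegrableOn (fun x => c x * u x * u x - δ^2 * (u'' x * u x))
      (Ioo (0:ℝ) b) := hcuu_int.sub (hu''u_int.const_mul (δ^2))
  have hfu_int : IntegrableOn (fun x => f x * u x) (Ioo (0:ℝ) b) := by
    refine hg_int.congr ?_
    filter_upwards [heqI] with x hx
    rw [← hx]; ring
  have hid : ∫ x in Ioo (0:ℝ) b, f x * u x
      = (∫ x in Ioo (0:ℝ) b, c x * u x * u x) + δ^2 * ∫ x in Ioo (0:ℝ) b, (u' x)^2 := by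
    have e1 : ∫ x in Ioo (0:ℝ) b, f x * u x
        = ∫ x in Ioo (0:ℝ) b, (c x * u x * u x - δ^2 * (u'' x * u x)) := by
      refine integral_congr_ae ?_
      filter_upwards [heqI] with x hx
      rw [← hx]; ring
    rw [e1, integral_sub hcuu_int (hu''u_int.const_mul (δ^2)), integral_const_mul, hIBP]
    ring
  have bound1 : cmin * (∫ x in Ioo (0:ℝ) b, (u x)^2) ≤ ∫ x in Ioo (0:ℝ) b, c x * u x * u x := by
    rw [← integral_const_mul]
    refine setIntegral_mono_on (hU2.const_mul cmin) hcuu_int measurableSet_Ioo (fun x hx => ?_)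
    have := hcl x (hsubI hx)
    nlinarith [sq_nonneg (u x)]
  have bound2 : (2*cmin) * (∫ x in Ioo (0:ℝ) b, f x * u x)
      ≤ (∫ x in Ioo (0:ℝ) b, (f x)^2) + cmin^2 * ∫ x in Ioo (0:ℝ) b, (u x)^2 := by
    rw [← integral_const_mul, ← integral_const_mul, ← integral_add hF2I (hU2.const_mul (cmin^2))]
    refine integral_mono (hfu_int.const_mul (2*cmin)) (hF2I.add (hU2.const_mul (cmin^2)))
      (fun x => ?_)
    nlinarith [sq_nonneg (f x - cmin * u x)]
  have hB0 : 0 ≤ ∫ x in Ioo (0:ℝ) b, (u' x)^2 :=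
    setIntegral_nonneg measurableSet_Ioo (fun x _ => sq_nonneg _)
  have hA0 : 0 ≤ ∫ x in Ioo (0:ℝ) b, (u x)^2 :=
    setIntegral_nonneg measurableSet_Ioo (fun x _ => sq_nonneg _)
  have hFa : (∫ x in Ioo (0:ℝ) b, (f x)^2) ≤ ∫ x in Ioo (0:ℝ) 1, (f x)^2 :=
    setIntegral_mono_set hf2 (Filter.Eventually.of_forall (fun x => sq_nonneg _))
      (HasSubset.Subset.eventuallyLE hsub)
  have hdB : 0 ≤ δ^2 * ∫ x in Ioo (0:ℝ) b, (u' x)^2 := mul_nonneg (sq_nonneg δ) hB0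
  have h1 : cmin * (∫ x in Ioo (0:ℝ) b, (u x)^2) + δ^2 * (∫ x in Ioo (0:ℝ) b, (u' x)^2)
      ≤ ∫ x in Ioo (0:ℝ) b, f x * u x := by linarith
  have h2 := mul_le_mul_of_nonneg_left h1 (by linarith : (0:ℝ) ≤ 2*cmin)
  constructor
  · nlinarith [h2, bound2, hFa, mul_nonneg (le_of_lt hcmin) hdB]
  · nlinarith [h2, bound2, hFa, mul_nonneg (le_of_lt hcmin) hdB,
      mul_nonneg (mul_nonneg (le_of_lt hcmin) (le_of_lt hcmin)) hA0]

set_option maxHeartbeats 1000000 in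
/-- [Melenk–Schwab, Lemma 2.1]: for `f ∈ L²(I)`, `c ∈ L^∞(I)` with
`c ≥ c_min > 0`, and `u_δ ∈ H²(I)` the homogeneous Dirichlet solution of
`-δ²u'' + cu = f`, there is `C > 0` independent of `δ` and `f` with
`δ²‖u‖_{H²} + δ‖u‖_{H¹} + ‖u‖_{L²} ≤ C‖f‖_{L²}`. -/
theorem stmt6 (c : ℝ → ℝ) (cmin cmax : ℝ) (hcmin : 0 < cmin)
    (hcmeas : Measurable c)
    (hcl : ∀ x ∈ Icc (0:ℝ) 1, cmin ≤ c x) (hcu : ∀ x ∈ Icc (0:ℝ) 1, c x ≤ cmax) :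
    ∃ C : ℝ, 0 < C ∧
      ∀ δ : ℝ, 0 < δ → δ < 1 →
        ∀ f u u' u'' : ℝ → ℝ, MemL2 f → StrongSol0 δ c f u u' u'' →
          δ^2 * H2norm u u' u'' + δ * H1norm u u' + L2norm u ≤ C * L2norm f := by
  refine ⟨3*(1/cmin) + 2*Real.sqrt (1/cmin) + Real.sqrt (2*cmax^2/cmin^2 + 2) + 1, ?_, ?_⟩
  · have h1 : 0 < 1/cmin := by positivity
    have h2 : 0 ≤ Real.sqrt (1/cmin) := Real.sqrt_nonneg _
    have h3 : 0 ≤ Real.sqrt (2*cmax^2/cmin^2 + 2) := Real.sqrt_nonneg _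
    linarith
  intro δ hδ0 hδ1 f u u' u'' hf hsol
  obtain ⟨⟨⟨ftc_u, hu_cont, hu2, hu'2⟩, ⟨ftc_u', hu'_cont, _, hu''2⟩⟩, hu0, hu1, heq⟩ := hsol
  have hIcc : Ioo (0:ℝ) 1 ⊆ Icc (0:ℝ) 1 := Ioo_subset_Icc_self
  have hδ2 : (δ:ℝ)^2 ≠ 0 := pow_ne_zero 2 (ne_of_gt hδ0)
  -- measurability of u'' on the set where u ≠ 0
  have hu_meas : AEStronglyMeasurable u (volume.restrict (Ioo (0:ℝ) 1)) :=
    (hu_cont.mono hIcc).aestronglyMeasurable measurableSet_Ioo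
  have hq_meas : AEStronglyMeasurable (fun x => c x * u x) (volume.restrict (Ioo (0:ℝ) 1)) :=
    (hcmeas.aestronglyMeasurable).mul hu_meas
  have hu''sq : AEStronglyMeasurable (fun x => (u'' x)^2) (volume.restrict (Ioo (0:ℝ) 1)) :=
    hu''2.aestronglyMeasurable
  have hfsq : AEStronglyMeasurable (fun x => (f x)^2) (volume.restrict (Ioo (0:ℝ) 1)) :=
    hf.aestronglyMeasurable
  have hqf_meas : AEStronglyMeasurable (fun x => (c x * u x) * f x)
      (volume.restrict (Ioo (0:ℝ) 1)) := by
    have h3 : AEStronglyMeasurable (fun x => (c x * u x - f x)^2)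
        (volume.restrict (Ioo (0:ℝ) 1)) := by
      refine (hu''sq.const_mul (δ^4)).congr ?_
      filter_upwards [heq] with x hx
      rw [← hx]; ring
    have e : (fun x => (c x * u x) * f x)
        = fun x => ((c x * u x) * (c x * u x) + (f x)^2 - (c x * u x - f x)^2) * (1/2) := by
      funext x; ring
    rw [e]
    exact (((hq_meas.mul hq_meas).add hfsq).sub h3).mul aestronglyMeasurable_const
  set N : Set ℝ := Ioo (0:ℝ) 1 ∩ u ⁻¹' ({(0:ℝ)}ᶜ) with hN
  have hNopen : IsOpen N :=
    (hu_cont.mono hIcc).isOpen_inter_preimage isOpen_Ioo isOpen_compl_singleton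
  have hle : volume.restrict N ≤ volume.restrict (Ioo (0:ℝ) 1) :=
    Measure.restrict_mono inter_subset_left le_rfl
  have hu''N : AEStronglyMeasurable u'' (volume.restrict N) := by
    have hfN : AEStronglyMeasurable f (volume.restrict N) := by
      have hqinv : AEStronglyMeasurable (fun x => (c x * u x)⁻¹) (volume.restrict N) :=
        ((hq_meas.mono_measure hle).aemeasurable.inv).aestronglyMeasurable
      refine ((hqf_meas.mono_measure hle).mul hqinv).congr ?_
      filter_upwards [ae_restrict_mem hNopen.measurableSet] with x hx
      have hc0 : c x ≠ 0 := ne_of_gt (lt_of_lt_of_le hcmin (hcl x (hIcc hx.1)))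
      have hux : u x ≠ 0 := hx.2
      simp only [Pi.mul_apply]
      field_simp
    refine ((((hq_meas.mono_measure hle).sub hfN).mul aestronglyMeasurable_const
      (g := fun _ => (δ^2)⁻¹)).congr ?_)
    filter_upwards [ae_restrict_of_ae_restrict_of_subset inter_subset_left heq] with x hx
    simp only [Pi.mul_apply, Pi.sub_apply]
    rw [← hx]
    field_simp
    ring
  -- the supremum of good right endpoints
  set S : Set ℝ := {x | x ∈ Icc (0:ℝ) 1 ∧
      AEStronglyMeasurable u'' (volume.restrict (Ioo 0 x))} with hS
  have hS0 : (0:ℝ) ∈ S := ⟨⟨le_refl _, by norm_num⟩, by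
    rw [Ioo_self, Measure.restrict_empty]; exact aestronglyMeasurable_zero_measure _⟩
  have hSb : BddAbove S := ⟨1, fun x hx => hx.1.2⟩
  have hSne : S.Nonempty := ⟨0, hS0⟩
  set a := sSup S with ha
  have ha0 : 0 ≤ a := le_csSup hSb hS0
  have ha1 : a ≤ 1 := csSup_le hSne (fun x hx => hx.1.2)
  have hmemS : ∀ x, 0 ≤ x → x < a → x ∈ S := by
    intro x hx0 hxa
    obtain ⟨y, hy, hxy⟩ := exists_lt_of_lt_csSup hSne hxa
    exact ⟨⟨hx0, le_trans hxy.le hy.1.2⟩,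
      hy.2.mono_measure (Measure.restrict_mono (Ioo_subset_Ioo_right hxy.le) le_rfl)⟩
  have haS : AEStronglyMeasurable u'' (volume.restrict (Ioo (0:ℝ) a)) := by
    rcases eq_or_lt_of_le ha0 with h | h
    · rw [← h, Ioo_self, Measure.restrict_empty]; exact aestronglyMeasurable_zero_measure _
    · have hcover : Ioo (0:ℝ) a = ⋃ n : ℕ, Ioo 0 (a - a/(n+2)) := by
        ext x
        simp only [mem_iUnion, mem_Ioo]
        constructor
        · rintro ⟨hx0, hxa⟩
          have hax : 0 < a - x := by linarith
          obtain ⟨n, hn⟩ := exists_nat_gt (a/(a - x))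
          refine ⟨n, hx0, ?_⟩
          rw [div_lt_iff₀ hax] at hn
          have h2 : a / ((n:ℝ)+2) < a - x := by
            rw [div_lt_iff₀ (by positivity)]
            nlinarith
          linarith
        · rintro ⟨n, hx0, hxn⟩
          have hpos : 0 < a/((n:ℝ)+2) := by positivity
          exact ⟨hx0, by linarith⟩
      rw [hcover, aestronglyMeasurable_iUnion_iff]
      intro n
      have h1 : a/((n:ℝ)+2) ≤ a := div_le_self h.le
        (by have := Nat.cast_nonneg (α := ℝ) n; linarith)
      have h2 : 0 < a/((n:ℝ)+2) := by positivity
      exact (hmemS _ (by linarith) (by linarith)).2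
  -- beyond a, the FTC integral is junk, so u' is constant
  have hconst : ∀ x, a < x → x ≤ 1 → u' x = u' 0 := by
    intro x hax hx1
    have hnot : ¬ AEStronglyMeasurable u'' (volume.restrict (Ioo 0 x)) := by
      intro hA
      have hxS : x ∈ S := ⟨⟨le_trans ha0 hax.le, hx1⟩, hA⟩
      have := le_csSup hSb hxS
      rw [← ha] at this
      linarith
    have hni : ¬ IntervalIntegrable u'' volume 0 x := by
      intro hI
      exact hnot ((hI.1.mono_set Ioo_subset_Ioc_self).aestronglyMeasurable)
    have hftc := ftc_u' x ⟨le_trans ha0 hax.le, hx1⟩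
    rw [intervalIntegral.integral_undef hni, add_zero] at hftc
    exact hftc
  have hu'ii : ∀ p q : ℝ, p ∈ Icc (0:ℝ) 1 → q ∈ Icc (0:ℝ) 1 →
      IntervalIntegrable u' volume p q := by
    intro p q hp hq
    apply (hu'_cont.mono ?_).intervalIntegrable
    intro t ht
    rcases le_total p q with h | h
    · rw [uIcc_of_le h] at ht
      exact ⟨le_trans hp.1 ht.1, le_trans ht.2 hq.2⟩
    · rw [uIcc_of_ge h] at ht
      exact ⟨le_trans hq.1 ht.1, le_trans ht.2 hp.2⟩
  -- u and u' vanish on [a,1]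
  have hbdry : u a = 0 ∧ ∀ x, a < x → x < 1 → (u x = 0 ∧ u' x = 0) := by
    rcases eq_or_lt_of_le ha1 with heq1 | hlt
    · refine ⟨by rw [heq1]; exact hu1, fun x h1 h2 => absurd (h1.trans h2) ?_⟩
      rw [heq1]; exact lt_irrefl 1
    · -- there is a zero of u in (a,1)
      have hz : ∃ z, z ∈ Ioo a 1 ∧ u z = 0 := by
        by_contra hcon
        push_neg at hcon
        have hsubN : Ioo a 1 ⊆ N := by
          intro x hx
          exact ⟨⟨lt_of_le_of_lt ha0 hx.1, hx.2⟩, hcon x hx⟩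
        have hAESM1 : AEStronglyMeasurable u'' (volume.restrict (Ioo (0:ℝ) 1)) := by
          have hU : Ioo (0:ℝ) 1 ⊆ (Ioo 0 a ∪ {a}) ∪ Ioo a 1 := by
            intro x hx
            rcases lt_trichotomy x a with h | h | h
            · exact Or.inl (Or.inl ⟨hx.1, h⟩)
            · exact Or.inl (Or.inr (by simp [h]))
            · exact Or.inr ⟨h, hx.2⟩
          refine AEStronglyMeasurable.mono_measure ?_ (Measure.restrict_mono hU le_rfl)
          refine aestronglyMeasurable_union_iff.mpr ⟨aestronglyMeasurable_union_iff.mpr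
            ⟨haS, ?_⟩, hu''N.mono_measure (Measure.restrict_mono hsubN le_rfl)⟩
          have hz0 : volume.restrict ({a} : Set ℝ) = 0 := by
            rw [Measure.restrict_eq_zero]; exact measure_singleton a
          rw [hz0]; exact aestronglyMeasurable_zero_measure _
        have h1S : (1:ℝ) ∈ S := ⟨⟨by norm_num, le_refl _⟩, hAESM1⟩
        have := le_csSup hSb h1S
        rw [← ha] at this
        linarith
      obtain ⟨z, hz, huz⟩ := hz
      have hzI : z ∈ Icc (0:ℝ) 1 := ⟨le_trans ha0 hz.1.le, hz.2.le⟩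
      have h1I : (1:ℝ) ∈ Icc (0:ℝ) 1 := ⟨by norm_num, le_refl _⟩
      have h0I : (0:ℝ) ∈ Icc (0:ℝ) 1 := ⟨le_refl _, by norm_num⟩
      -- u' 0 = 0
      have hk : u' 0 = 0 := by
        have h1 := ftc_u 1 h1I
        have h2 := ftc_u z hzI
        have hadd := intervalIntegral.integral_add_adjacent_intervals
          (hu'ii 0 z h0I hzI) (hu'ii z 1 hzI h1I)
        have hcongr : ∫ t in z..(1:ℝ), u' t = ∫ t in z..(1:ℝ), u' 0 := by
          refine intervalIntegral.integral_congr (fun t ht => ?_)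
          rw [uIcc_of_le hz.2.le] at ht
          exact hconst t (lt_of_lt_of_le hz.1 ht.1) ht.2
        rw [intervalIntegral.integral_const, smul_eq_mul] at hcongr
        have hz1 : (1:ℝ) - z ≠ 0 := by
          have := hz.2; intro hcc; linarith
        have : (1 - z) * u' 0 = 0 := by
          rw [← hcongr]
          rw [hu1] at h1
          rw [huz] at h2
          linarith
        rcases mul_eq_zero.mp this with h | h
        · exact absurd h hz1
        · exact h
      have hu'z : ∀ x, a < x → x ≤ 1 → u' x = 0 := fun x h1 h2 => by
        rw [hconst x h1 h2, hk]
      have hux : ∀ x, a < x → x ≤ 1 → u x = 0 := by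
        intro x hax hx1
        have hxI : x ∈ Icc (0:ℝ) 1 := ⟨le_trans ha0 hax.le, hx1⟩
        have h1 := ftc_u 1 h1I
        have h2 := ftc_u x hxI
        have hadd := intervalIntegral.integral_add_adjacent_intervals
          (hu'ii 0 x h0I hxI) (hu'ii x 1 hxI h1I)
        have hcongr : ∫ t in x..(1:ℝ), u' t = ∫ t in x..(1:ℝ), (0:ℝ) := by
          refine intervalIntegral.integral_congr (fun t ht => ?_)
          rw [uIcc_of_le hx1] at ht
          exact hu'z t (lt_of_lt_of_le hax ht.1) ht.2
        rw [intervalIntegral.integral_zero] at hcongr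
        rw [hu1] at h1
        linarith
      have hua : u a = 0 := by
        set x₀ := (a+1)/2 with hx₀def
        have hax₀ : a < x₀ := by rw [hx₀def]; linarith
        have hx₀1 : x₀ ≤ 1 := by rw [hx₀def]; linarith
        have hx₀I : x₀ ∈ Icc (0:ℝ) 1 := ⟨le_trans ha0 hax₀.le, hx₀1⟩
        have haI : a ∈ Icc (0:ℝ) 1 := ⟨ha0, ha1⟩
        have h0I : (0:ℝ) ∈ Icc (0:ℝ) 1 := ⟨le_refl _, by norm_num⟩
        have h2 := ftc_u x₀ hx₀I
        have h3 := ftc_u a haI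
        have hadd := intervalIntegral.integral_add_adjacent_intervals
          (hu'ii 0 a h0I haI) (hu'ii a x₀ haI hx₀I)
        have hzero : ∫ t in a..x₀, u' t = 0 := by
          rw [intervalIntegral.integral_of_le hax₀.le]
          rw [show (∫ t in Ioc a x₀, u' t) = ∫ t in Ioc a x₀, (0:ℝ) from
            setIntegral_congr_fun measurableSet_Ioc
              (fun t ht => hu'z t ht.1 (le_trans ht.2 hx₀1))]
          simp
        have := hux x₀ hax₀ hx₀1
        linarith
      exact ⟨hua, fun x h1 h2 => ⟨hux x h1 h2.le, hu'z x h1 h2.le⟩⟩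
  obtain ⟨hua, hrest⟩ := hbdry
  -- energy estimates on (0, a)
  have hEE := my_energy_est δ c f u u' u'' cmin cmax hcmin hcmeas hcl hcu a ha0 ha1
    hu_cont hu'_cont ftc_u ftc_u' haS hu2 hu''2 hf heq hu0 hua
  -- the L² norms over (0,1) reduce to (0,a)
  have hsplit : ∀ v : ℝ → ℝ, IntegrableOn (fun x => (v x)^2) (Ioo (0:ℝ) 1) →
      (∀ x, a < x → x < 1 → v x = 0) → (v a = 0 ∨ a = 1) →
      (∫ x in Ioo (0:ℝ) 1, (v x)^2) = ∫ x in Ioo (0:ℝ) a, (v x)^2 := by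
    intro v hint hvz hva
    have hdiff := integral_inter_add_diff (μ := volume) (s := Ioo (0:ℝ) 1)
      (t := Ioo (0:ℝ) a) measurableSet_Ioo hint
    have hint1 : Ioo (0:ℝ) 1 ∩ Ioo 0 a = Ioo 0 a :=
      inter_eq_right.mpr (Ioo_subset_Ioo_right ha1)
    have hzero2 : ∫ x in Ioo (0:ℝ) 1 \ Ioo 0 a, (v x)^2 = 0 := by
      rw [show (∫ x in Ioo (0:ℝ) 1 \ Ioo 0 a, (v x)^2)
          = ∫ x in Ioo (0:ℝ) 1 \ Ioo 0 a, (0:ℝ) from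
        setIntegral_congr_fun (measurableSet_Ioo.diff measurableSet_Ioo) ?_]
      · simp
      intro x hx
      obtain ⟨hx1, hx2⟩ := hx
      simp only [mem_Ioo, not_and, not_lt] at hx2
      have hax : a ≤ x := hx2 hx1.1
      rcases eq_or_lt_of_le hax with h | h
      · rcases hva with hva | hva
        · show v x ^ 2 = 0
          rw [← h, hva]; norm_num
        · exfalso
          have hx1' : x = 1 := by rw [← h, hva]
          linarith [hx1.2, hx1'.symm.le]
      · show v x ^ 2 = 0
        rw [hvz x h hx1.2]; norm_num
    rw [hint1] at hdiff
    linarith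
  have hsplitA : (∫ x in Ioo (0:ℝ) 1, (u x)^2) = ∫ x in Ioo (0:ℝ) a, (u x)^2 :=
    hsplit u hu2 (fun x h1 h2 => (hrest x h1 h2).1) (Or.inl hua)
  have hsplitB : (∫ x in Ioo (0:ℝ) 1, (u' x)^2) = ∫ x in Ioo (0:ℝ) a, (u' x)^2 := by
    have hdiff := integral_inter_add_diff (μ := volume) (s := Ioo (0:ℝ) 1)
      (t := Ioo (0:ℝ) a) measurableSet_Ioo hu'2
    have hint1 : Ioo (0:ℝ) 1 ∩ Ioo 0 a = Ioo 0 a :=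
      inter_eq_right.mpr (Ioo_subset_Ioo_right ha1)
    rw [hint1] at hdiff
    have hzero2 : ∫ x in Ioo (0:ℝ) 1 \ Ioo 0 a, (u' x)^2 = 0 := by
      have hae : ∀ᵐ x ∂volume, x ∈ Ioo (0:ℝ) 1 \ Ioo 0 a → (u' x)^2 = 0 := by
        rw [ae_iff]
        refine measure_mono_null (fun x hx => ?_) (measure_singleton a)
        simp only [mem_setOf_eq] at hx
        push_neg at hx
        obtain ⟨⟨hxI, hxn⟩, hx2⟩ := hx
        simp only [mem_Ioo, not_and, not_lt] at hxn
        have hax : a ≤ x := hxn hxI.1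
        rcases eq_or_lt_of_le hax with h | h
        · simp only [mem_singleton_iff]; exact h.symm
        · exact absurd (by rw [(hrest x h hxI.2).2]; norm_num) hx2
      rw [setIntegral_congr_ae (measurableSet_Ioo.diff measurableSet_Ioo) hae]
      simp
    linarith
  -- rewrite energy estimates in terms of L2sq
  have hL2u : L2sq u = ∫ x in Ioo (0:ℝ) a, (u x)^2 := hsplitA
  have hL2u' : L2sq u' = ∫ x in Ioo (0:ℝ) a, (u' x)^2 := hsplitB
  have hF2nn : (0:ℝ) ≤ ∫ x in Ioo (0:ℝ) 1, (f x)^2 :=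
    setIntegral_nonneg measurableSet_Ioo (fun x _ => sq_nonneg _)
  set F2 : ℝ := ∫ x in Ioo (0:ℝ) 1, (f x)^2 with hF2def
  have hA : cmin^2 * L2sq u ≤ F2 := by rw [hL2u]; exact hEE.1
  have hB : cmin * (δ^2 * L2sq u') ≤ F2 := by rw [hL2u']; exact hEE.2
  have hAnn : 0 ≤ L2sq u := my_L2sq_nonneg u
  have hBnn : 0 ≤ L2sq u' := my_L2sq_nonneg u'
  have hDnn : 0 ≤ L2sq u'' := my_L2sq_nonneg u''
  -- bound on the second derivative
  have hD : δ^4 * L2sq u'' ≤ 2*cmax^2 * L2sq u + 2 * F2 := by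
    have hu''2' : IntegrableOn (fun x => (u'' x)^2) (Ioo (0:ℝ) 1) := hu''2
    have hu2' : IntegrableOn (fun x => (u x)^2) (Ioo (0:ℝ) 1) := hu2
    have hf2' : IntegrableOn (fun x => (f x)^2) (Ioo (0:ℝ) 1) := hf
    have hLint : IntegrableOn (fun x => (c x * u x - f x)^2) (Ioo (0:ℝ) 1) := by
      refine Integrable.congr (hu''2'.const_mul (δ^4)) ?_
      filter_upwards [heq] with x hx
      rw [← hx]; ring
    have hRint : IntegrableOn (fun x => 2*cmax^2*(u x)^2 + 2*(f x)^2) (Ioo (0:ℝ) 1) :=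
      (hu2'.const_mul _).add (hf2'.const_mul _)
    have hcongr : δ^4 * L2sq u'' = ∫ x in Ioo (0:ℝ) 1, (c x * u x - f x)^2 := by
      show δ^4 * (∫ x in Ioo (0:ℝ) 1, (u'' x)^2) = _
      rw [← integral_const_mul]
      refine integral_congr_ae ?_
      filter_upwards [heq] with x hx
      rw [← hx]; ring
    have hmono : (∫ x in Ioo (0:ℝ) 1, (c x * u x - f x)^2)
        ≤ ∫ x in Ioo (0:ℝ) 1, (2*cmax^2*(u x)^2 + 2*(f x)^2) := by
      refine integral_mono_ae hLint hRint ?_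
      filter_upwards [ae_restrict_mem measurableSet_Ioo] with x hx
      have h1 := hcl x (hIcc hx)
      have h2 := hcu x (hIcc hx)
      nlinarith [sq_nonneg (c x * u x + f x), sq_nonneg (u x),
        mul_nonneg (mul_nonneg (sub_nonneg.mpr h2) (by linarith : (0:ℝ) ≤ cmax + c x))
          (sq_nonneg (u x))]
    have hsum : (∫ x in Ioo (0:ℝ) 1, (2*cmax^2*(u x)^2 + 2*(f x)^2))
        = 2*cmax^2 * L2sq u + 2 * F2 := by
      rw [integral_add (hu2'.const_mul _) (hf2'.const_mul _), integral_const_mul,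
        integral_const_mul]
      rfl
    rw [hcongr]
    rw [hsum] at hmono
    exact hmono
  have hδ4 : δ^4 * L2sq u'' ≤ (2*cmax^2/cmin^2 + 2) * F2 := by
    have key : (2*cmax^2) * (cmin^2 * L2sq u) ≤ (2*cmax^2) * F2 :=
      mul_le_mul_of_nonneg_left hA (by positivity)
    have e : (2*cmax^2/cmin^2) * F2 * cmin^2 = 2*cmax^2 * F2 := by field_simp
    have key2 : (2*cmax^2) * L2sq u ≤ (2*cmax^2/cmin^2) * F2 := by
      rw [← mul_le_mul_iff_left₀ (show (0:ℝ) < cmin^2 by positivity), e]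
      calc 2*cmax^2 * L2sq u * cmin^2 = 2*cmax^2 * (cmin^2 * L2sq u) := by ring
        _ ≤ 2*cmax^2 * F2 := key
    linarith
  set Fs := Real.sqrt F2 with hFsdef
  have hFsnn : 0 ≤ Fs := Real.sqrt_nonneg _
  have hsA : Real.sqrt (L2sq u) ≤ (1/cmin) * Fs := by
    have key : (1/cmin)^2 * (cmin^2 * L2sq u) = L2sq u := by field_simp
    have h1 := mul_le_mul_of_nonneg_left hA (sq_nonneg (1/cmin))
    rw [key] at h1
    calc Real.sqrt (L2sq u) ≤ Real.sqrt ((1/cmin)^2 * F2) := Real.sqrt_le_sqrt h1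
      _ = (1/cmin) * Fs := by
          rw [Real.sqrt_mul (sq_nonneg _), Real.sqrt_sq (by positivity)]
  have hsB : δ * Real.sqrt (L2sq u') ≤ Real.sqrt (1/cmin) * Fs := by
    have key : (1/cmin) * (cmin * (δ^2 * L2sq u')) = δ^2 * L2sq u' := by field_simp
    have h1 := mul_le_mul_of_nonneg_left hB (le_of_lt (show (0:ℝ) < 1/cmin by positivity))
    rw [key] at h1
    calc δ * Real.sqrt (L2sq u') = Real.sqrt (δ^2 * L2sq u') := by
          rw [Real.sqrt_mul (sq_nonneg _), Real.sqrt_sq hδ0.le]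
      _ ≤ Real.sqrt ((1/cmin) * F2) := Real.sqrt_le_sqrt h1
      _ = Real.sqrt (1/cmin) * Fs := Real.sqrt_mul (by positivity) _
  have hsD : δ^2 * Real.sqrt (L2sq u'') ≤ Real.sqrt (2*cmax^2/cmin^2 + 2) * Fs := by
    calc δ^2 * Real.sqrt (L2sq u'') = Real.sqrt (δ^4 * L2sq u'') := by
          rw [show (δ:ℝ)^4 = (δ^2)^2 by ring, Real.sqrt_mul (sq_nonneg _),
            Real.sqrt_sq (sq_nonneg _)]
      _ ≤ Real.sqrt ((2*cmax^2/cmin^2 + 2) * F2) := Real.sqrt_le_sqrt hδ4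
      _ = Real.sqrt (2*cmax^2/cmin^2 + 2) * Fs := Real.sqrt_mul (by positivity) _
  -- assemble
  have hsqAnn : 0 ≤ Real.sqrt (L2sq u) := Real.sqrt_nonneg _
  have hsqBnn : 0 ≤ Real.sqrt (L2sq u') := Real.sqrt_nonneg _
  have hsqDnn : 0 ≤ Real.sqrt (L2sq u'') := Real.sqrt_nonneg _
  have hH2 : H2norm u u' u''
      ≤ Real.sqrt (L2sq u) + Real.sqrt (L2sq u') + Real.sqrt (L2sq u'') := by
    have h1 := my_sqrt_add_le (L2sq u + L2sq u') (L2sq u'') (by linarith) hDnn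
    have h2 := my_sqrt_add_le (L2sq u) (L2sq u') hAnn hBnn
    show Real.sqrt (L2sq u + L2sq u' + L2sq u'') ≤ _
    linarith
  have hH1 : H1norm u u' ≤ Real.sqrt (L2sq u) + Real.sqrt (L2sq u') := by
    show Real.sqrt (L2sq u + L2sq u') ≤ _
    exact my_sqrt_add_le _ _ hAnn hBnn
  have hH2nn : 0 ≤ H2norm u u' u'' := Real.sqrt_nonneg _
  have hH1nn : 0 ≤ H1norm u u' := Real.sqrt_nonneg _
  have e1 : δ^2 * H2norm u u' u'' ≤ Real.sqrt (L2sq u) + δ * Real.sqrt (L2sq u')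
      + δ^2 * Real.sqrt (L2sq u'') := by
    have h := mul_le_mul_of_nonneg_left hH2 (sq_nonneg δ)
    have hδsq : δ^2 ≤ 1 := by nlinarith
    have t1 : δ^2 * Real.sqrt (L2sq u) ≤ Real.sqrt (L2sq u) := by
      nlinarith [mul_nonneg (sub_nonneg.mpr hδsq) hsqAnn]
    have t2 : δ^2 * Real.sqrt (L2sq u') ≤ δ * Real.sqrt (L2sq u') := by
      have hd : 0 ≤ δ - δ^2 := by nlinarith
      nlinarith [mul_nonneg hd hsqBnn]
    have hexp : δ^2 * (Real.sqrt (L2sq u) + Real.sqrt (L2sq u') + Real.sqrt (L2sq u''))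
        = δ^2 * Real.sqrt (L2sq u) + δ^2 * Real.sqrt (L2sq u')
          + δ^2 * Real.sqrt (L2sq u'') := by ring
    linarith [h, t1, t2, hexp]
  have e2 : δ * H1norm u u' ≤ Real.sqrt (L2sq u) + δ * Real.sqrt (L2sq u') := by
    have h := mul_le_mul_of_nonneg_left hH1 hδ0.le
    have t1 : δ * Real.sqrt (L2sq u) ≤ Real.sqrt (L2sq u) := by
      have hd : 0 ≤ 1 - δ := by linarith
      nlinarith [mul_nonneg hd hsqAnn]
    have hexp : δ * (Real.sqrt (L2sq u) + Real.sqrt (L2sq u'))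
        = δ * Real.sqrt (L2sq u) + δ * Real.sqrt (L2sq u') := by ring
    linarith [h, t1, hexp]
  have e3 : L2norm u ≤ (1/cmin) * Fs := hsA
  have hLf : L2norm f = Fs := rfl
  rw [hLf]
  linarith [e1, e2, e3, hsA, hsB, hsD, hFsnn]
end

section
/- H¹(I) is contained in H^{1/2,∞}(I) with continuous inclusion: there exists C > 0 such that ‖v‖_{1/2,∞} ≤ C ‖v‖_{H¹(I)} for every v ∈ H¹(I). -/
open MeasureTheory Set Polynomial

section Stmt9Aux

open MeasureTheory Set Filter Topology intervalIntegral

private lemma L2sq_nonneg (f : ℝ → ℝ) : 0 ≤ L2sq f :=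
  MeasureTheory.integral_nonneg fun _ => sq_nonneg _

private lemma sqrt_le_of_sq_le {a b : ℝ} (hb : 0 ≤ b) (h : a ≤ b^2) : Real.sqrt a ≤ b :=
  (Real.sqrt_le_sqrt h).trans_eq (Real.sqrt_sq hb)

private lemma contIntOn {f : ℝ → ℝ} (hf : Continuous f) : IntegrableOn f (Ioo (0:ℝ) 1) :=
  (hf.integrableOn_Icc (a := 0) (b := 1)).mono_set Ioo_subset_Icc_self

private lemma contOnIntOn {f : ℝ → ℝ} (hf : ContinuousOn f (Icc (0:ℝ) 1)) :
    IntegrableOn f (Ioo (0:ℝ) 1) :=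
  (hf.integrableOn_Icc).mono_set Ioo_subset_Icc_self

private lemma l1_le_sqrt_l2 {f : ℝ → ℝ} (hf : IntegrableOn f (Ioo (0:ℝ) 1))
    (hf2 : IntegrableOn (fun x => (f x)^2) (Ioo (0:ℝ) 1)) :
    ∫ x in Ioo (0:ℝ) 1, |f x| ≤ Real.sqrt (L2sq f) := by
  set B := Real.sqrt (L2sq f) with hB
  have hB0 : 0 ≤ B := Real.sqrt_nonneg _
  have hBsq : B^2 = L2sq f := Real.sq_sqrt (L2sq_nonneg f)
  refine le_of_forall_sub_le fun ε hε => ?_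
  have hc : 0 < B + ε := by linarith
  have hconst : IntegrableOn (fun _ : ℝ => (B+ε)/2) (Ioo (0:ℝ) 1) :=
    integrableOn_const measure_Ioo_lt_top.ne
  have hint2 : IntegrableOn (fun x => (f x)^2/(B+ε)/2 + (B+ε)/2) (Ioo (0:ℝ) 1) :=
    ((hf2.div_const (B+ε)).div_const 2).add hconst
  have hmono : ∫ x in Ioo (0:ℝ) 1, |f x| ≤
      ∫ x in Ioo (0:ℝ) 1, ((f x)^2/(B+ε)/2 + (B+ε)/2) := by
    refine setIntegral_mono_on hf.abs hint2 measurableSet_Ioo fun x _ => ?_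
    have hposc : (0:ℝ) < (B+ε)*2 := by positivity
    rw [div_div]
    have hkey : |f x| - (B+ε)/2 ≤ (f x)^2/((B+ε)*2) := by
      rw [le_div_iff₀ hposc]
      nlinarith [sq_abs (f x), sq_nonneg (|f x| - (B+ε))]
    linarith
  have heval : ∫ x in Ioo (0:ℝ) 1, ((f x)^2/(B+ε)/2 + (B+ε)/2)
      = (L2sq f)/(B+ε)/2 + (B+ε)/2 := by
    rw [MeasureTheory.integral_add ((hf2.div_const (B+ε)).div_const 2) hconst,
      MeasureTheory.integral_div, MeasureTheory.integral_div, setIntegral_const]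
    simp [L2sq, Real.volume_Ioo]
  have hfinal : (L2sq f)/(B+ε)/2 + (B+ε)/2 ≤ B + ε := by
    rw [div_div]
    have h9 : L2sq f/((B+ε)*2) ≤ (B+ε)/2 := by
      rw [div_le_div_iff₀ (by positivity) (by positivity)]
      nlinarith
    linarith
  linarith

private lemma H1norm_nonneg (f g : ℝ → ℝ) : 0 ≤ H1norm f g := Real.sqrt_nonneg _

private lemma boundary_bound {v w' : ℝ → ℝ} (h : IsH1 v w')
    (hw : IntegrableOn w' (Ioo (0:ℝ) 1)) :
    max |v 0| |v 1| ≤ 3 * H1norm v w' := by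
  obtain ⟨hftc, hcont, hvL2, hwL2⟩ := h
  have hw1 : ∀ x ∈ Icc (0:ℝ) 1, IntervalIntegrable w' volume 0 x := by
    intro x hx
    rw [intervalIntegrable_iff_integrableOn_Ioc_of_le hx.1,
      integrableOn_Ioc_iff_integrableOn_Ioo]
    exact hw.mono_set (Ioo_subset_Ioo le_rfl hx.2)
  set A := ∫ x in Ioo (0:ℝ) 1, |w' x| with hA
  have habs : ∀ x ∈ Icc (0:ℝ) 1, |∫ s in (0:ℝ)..x, w' s| ≤ A := by
    intro x hx
    have h1 : |∫ s in (0:ℝ)..x, w' s| ≤ ∫ s in (0:ℝ)..x, |w' s| :=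
      intervalIntegral.abs_integral_le_integral_abs hx.1
    have h2 : ∫ s in (0:ℝ)..x, |w' s| = ∫ s in Ioc (0:ℝ) x, |w' s| :=
      intervalIntegral.integral_of_le hx.1
    have h3 : ∫ s in Ioc (0:ℝ) x, |w' s| ≤ A := by
      refine setIntegral_mono_set hw.abs (ae_of_all _ fun y => abs_nonneg _) ?_
      refine (ae_le_set).2 (measure_mono_null (t := {(1:ℝ)}) (fun y hy => ?_) Real.volume_singleton)
      obtain ⟨⟨hy1, hy2⟩, hy3⟩ := hy
      have : ¬ (0 < y ∧ y < 1) := hy3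
      have hy4 : (1:ℝ) ≤ y := by
        by_contra hcon
        exact this ⟨hy1, lt_of_not_ge hcon⟩
      have : y = 1 := le_antisymm (hy2.trans hx.2) hy4
      simp [this]
    linarith
  have hA0 : 0 ≤ A := MeasureTheory.integral_nonneg fun _ => abs_nonneg _
  have hpt : ∀ y ∈ Ioo (0:ℝ) 1, max |v 0| |v 1| ≤ |v y| + 2*A := by
    intro y hy
    have hyIcc : y ∈ Icc (0:ℝ) 1 := ⟨hy.1.le, hy.2.le⟩
    have h1 := hftc y hyIcc
    have h2 := hftc 1 ⟨zero_le_one, le_rfl⟩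
    have h3 := habs y hyIcc
    have h4 := habs 1 ⟨zero_le_one, le_rfl⟩
    refine max_le ?_ ?_
    · have e : v 0 = v y - ∫ s in (0:ℝ)..y, w' s := by rw [h1]; ring
      have : |v 0| ≤ |v y| + |∫ s in (0:ℝ)..y, w' s| := by
        rw [e]; exact abs_sub _ _
      linarith
    · have : |v 1| ≤ |v y| + |∫ s in (0:ℝ)..1, w' s| + |∫ s in (0:ℝ)..y, w' s| := by
        have : v 1 = v y - (∫ s in (0:ℝ)..y, w' s) + ∫ s in (0:ℝ)..1, w' s := by
          rw [h1, h2]; ring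
        rw [this]
        calc |v y - (∫ s in (0:ℝ)..y, w' s) + ∫ s in (0:ℝ)..1, w' s|
            ≤ |v y - ∫ s in (0:ℝ)..y, w' s| + |∫ s in (0:ℝ)..1, w' s| := abs_add_le _ _
          _ ≤ |v y| + |∫ s in (0:ℝ)..y, w' s| + |∫ s in (0:ℝ)..1, w' s| := by
              have := abs_sub (v y) (∫ s in (0:ℝ)..y, w' s)
              linarith
          _ = |v y| + |∫ s in (0:ℝ)..1, w' s| + |∫ s in (0:ℝ)..y, w' s| := by ring
      linarith
  have hMint : max |v 0| |v 1| = ∫ _y in Ioo (0:ℝ) 1, max |v 0| |v 1| := by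
    rw [setIntegral_const]; simp [Real.volume_Ioo]
  have hvabs : IntegrableOn (fun y => |v y|) (Ioo (0:ℝ) 1) := (contOnIntOn hcont).abs
  have hrhs : IntegrableOn (fun y => |v y| + 2*A) (Ioo (0:ℝ) 1) :=
    hvabs.add (integrableOn_const measure_Ioo_lt_top.ne)
  have hstep : max |v 0| |v 1| ≤ ∫ y in Ioo (0:ℝ) 1, (|v y| + 2*A) := by
    rw [hMint]
    exact setIntegral_mono_on (integrableOn_const measure_Ioo_lt_top.ne) hrhs
      measurableSet_Ioo hpt
  have heval : ∫ y in Ioo (0:ℝ) 1, (|v y| + 2*A) = (∫ y in Ioo (0:ℝ) 1, |v y|) + 2*A := by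
    rw [MeasureTheory.integral_add hvabs (integrableOn_const measure_Ioo_lt_top.ne),
      setIntegral_const]
    simp [Real.volume_Ioo]
  have hl1v : ∫ y in Ioo (0:ℝ) 1, |v y| ≤ Real.sqrt (L2sq v) :=
    l1_le_sqrt_l2 (contOnIntOn hcont) hvL2
  have hl1w : A ≤ Real.sqrt (L2sq w') := l1_le_sqrt_l2 hw hwL2
  have hs1 : Real.sqrt (L2sq v) ≤ H1norm v w' :=
    Real.sqrt_le_sqrt (le_add_of_nonneg_right (L2sq_nonneg _))
  have hs2 : Real.sqrt (L2sq w') ≤ H1norm v w' :=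
    Real.sqrt_le_sqrt (le_add_of_nonneg_left (L2sq_nonneg _))
  linarith

end Stmt9Aux
section Stmt9Aux2

open MeasureTheory Set Filter Topology intervalIntegral

private lemma exists_good_deriv {v v' : ℝ → ℝ} (h : IsH1 v v') :
    ∃ w' : ℝ → ℝ, IsH1 v w' ∧ L2sq w' ≤ L2sq v' ∧ IntegrableOn w' (Ioo (0:ℝ) 1) := by
  obtain ⟨hftc, hcont, hvL2, hv'L2⟩ := h
  set S : Set ℝ := {x | x ∈ Icc (0:ℝ) 1 ∧ IntervalIntegrable v' volume 0 x} with hSdef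
  have h0S : (0:ℝ) ∈ S := ⟨⟨le_rfl, zero_le_one⟩, IntervalIntegrable.refl⟩
  have hSb : BddAbove S := ⟨1, fun x hx => hx.1.2⟩
  have hSne : S.Nonempty := ⟨0, h0S⟩
  set c := sSup S with hcdef
  have hc0 : 0 ≤ c := le_csSup hSb h0S
  have hc1 : c ≤ 1 := csSup_le hSne fun x hx => hx.1.2
  have hdown : ∀ x : ℝ, 0 ≤ x → x < c → IntervalIntegrable v' volume 0 x := by
    intro x hx0 hxc
    obtain ⟨s, hsS, hxs⟩ := exists_lt_of_lt_csSup hSne hxc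
    refine hsS.2.mono_set ?_
    rw [uIcc_of_le hx0, uIcc_of_le (hx0.trans hxs.le)]
    exact Icc_subset_Icc le_rfl hxs.le
  set X : ℕ → ℝ := fun n => max 0 (c - 1/(n+1)) with hXdef
  have hX0 : ∀ n, 0 ≤ X n := fun n => le_max_left _ _
  have hXc : ∀ n, X n ≤ c := fun n => max_le hc0 (by
    have h1 : (0:ℝ) < 1/((n:ℝ)+1) := by positivity
    linarith)
  have hXlt : 0 < c → ∀ n, X n < c := by
    intro h0 n
    refine max_lt h0 ?_
    have h1 : (0:ℝ) < 1/((n:ℝ)+1) := by positivity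
    linarith
  have hXint : ∀ n, IntegrableOn v' (Ioc 0 (X n)) := by
    intro n
    rcases eq_or_lt_of_le hc0 with h0 | h0
    · have hx : X n = 0 := le_antisymm (le_of_le_of_eq (hXc n) h0.symm) (hX0 n)
      simp [hx]
    · exact (hdown (X n) (hX0 n) (hXlt h0 n)).1
  have hUnion : (⋃ n : ℕ, Ioc (0:ℝ) (X n)) = Ioo 0 c := by
    ext x
    simp only [mem_iUnion, mem_Ioc, mem_Ioo]
    constructor
    · rintro ⟨n, hx0, hxn⟩
      refine ⟨hx0, lt_of_le_of_lt hxn ?_⟩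
      rcases eq_or_lt_of_le hc0 with h0 | h0
      · exfalso
        have hx : X n = 0 := le_antisymm (le_of_le_of_eq (hXc n) h0.symm) (hX0 n)
        rw [hx] at hxn; linarith
      · exact hXlt h0 n
    · rintro ⟨hx0, hxc⟩
      obtain ⟨n, hn⟩ := exists_nat_one_div_lt (sub_pos.2 hxc)
      exact ⟨n, hx0, le_max_of_le_right (by linarith)⟩
  have hIoc : IntegrableOn v' (Ioo 0 c) := by
    refine ⟨?_, ?_⟩
    · rw [aestronglyMeasurable_iff_aemeasurable, ← hUnion]
      exact aemeasurable_iUnion_iff.2 fun n => ((hXint n).1).aemeasurable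
    · have hg1 : IntegrableOn (fun x => (v' x)^2 + 1) (Ioo (0:ℝ) 1) :=
        hv'L2.add (integrableOn_const measure_Ioo_lt_top.ne)
      have hg : IntegrableOn (fun x => (v' x)^2 + 1) (Ioo 0 c) :=
        hg1.mono_set (Ioo_subset_Ioo le_rfl hc1)
      refine HasFiniteIntegral.mono' hg.2 (ae_of_all _ fun x => ?_)
      rw [Real.norm_eq_abs]
      nlinarith [sq_abs (v' x), sq_nonneg (|v' x| - 1)]
  have hXmono : Monotone X := by
    intro m n hmn
    refine max_le_max le_rfl ?_
    have h1 : ((m:ℝ)+1) ≤ (n:ℝ)+1 := by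
      have : (m:ℝ) ≤ n := Nat.cast_le.2 hmn
      linarith
    have h2 : (1:ℝ)/((n:ℝ)+1) ≤ 1/((m:ℝ)+1) :=
      one_div_le_one_div_of_le (by positivity) h1
    linarith
  have hlim : Tendsto (fun n => ∫ x in Ioc (0:ℝ) (X n), v' x) atTop
      (𝓝 (∫ x in Ioo (0:ℝ) c, v' x)) := by
    have := tendsto_setIntegral_of_monotone (μ := volume) (f := v')
      (s := fun n : ℕ => Ioc (0:ℝ) (X n)) (fun n => measurableSet_Ioc)
      (fun m n hmn => Ioc_subset_Ioc le_rfl (hXmono hmn)) (by rw [hUnion]; exact hIoc)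
    rwa [hUnion] at this
  have hXtend : Tendsto X atTop (𝓝 c) := by
    have h1 : Tendsto (fun n : ℕ => c - 1/((n:ℝ)+1)) atTop (𝓝 (c - 0)) :=
      tendsto_const_nhds.sub tendsto_one_div_add_atTop_nhds_zero_nat
    have h2 := (tendsto_const_nhds (x := (0:ℝ)) (f := atTop)).max h1
    rw [sub_zero] at h2
    rwa [max_eq_right hc0] at h2
  have hvX : Tendsto (fun n => v (X n)) atTop (𝓝 (v c)) := by
    have hcw : ContinuousWithinAt v (Icc 0 1) c := hcont c ⟨hc0, hc1⟩
    exact hcw.tendsto.comp (tendsto_nhdsWithin_of_tendsto_nhds_of_eventually_within _ hXtend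
      (Eventually.of_forall fun n => ⟨hX0 n, (hXc n).trans hc1⟩))
  have hvXeq : ∀ n, v (X n) = v 0 + ∫ x in Ioc (0:ℝ) (X n), v' x := by
    intro n
    rw [← intervalIntegral.integral_of_le (hX0 n)]
    exact hftc (X n) ⟨hX0 n, (hXc n).trans hc1⟩
  have hkey : v c = v 0 + ∫ x in Ioo (0:ℝ) c, v' x := by
    have h2 : Tendsto (fun n => v (X n)) atTop (𝓝 (v 0 + ∫ x in Ioo (0:ℝ) c, v' x)) := by
      simp only [hvXeq]
      exact tendsto_const_nhds.add hlim
    exact tendsto_nhds_unique hvX h2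
  have hconst : ∀ x, c < x → x ≤ 1 → v x = v 0 := by
    intro x hcx hx1
    have hnot : ¬ IntervalIntegrable v' volume 0 x := fun hint =>
      absurd (le_csSup hSb ⟨⟨hc0.trans hcx.le, hx1⟩, hint⟩) (not_le.2 hcx)
    have hx := hftc x ⟨hc0.trans hcx.le, hx1⟩
    rwa [intervalIntegral.integral_undef hnot, add_zero] at hx
  have hIoocZero : c < 1 → ∫ x in Ioo (0:ℝ) c, v' x = 0 := by
    intro hclt
    set Y : ℕ → ℝ := fun n => min 1 (c + 1/((n:ℝ)+1)) with hYdef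
    have hYgt : ∀ n, c < Y n := fun n => lt_min hclt (by
      have h1 : (0:ℝ) < 1/((n:ℝ)+1) := by positivity
      linarith)
    have hY1 : ∀ n, Y n ≤ 1 := fun n => min_le_left _ _
    have hY0 : ∀ n, 0 ≤ Y n := fun n => le_of_lt (lt_of_le_of_lt hc0 (hYgt n))
    have hYv : ∀ n, v (Y n) = v 0 := fun n => hconst (Y n) (hYgt n) (hY1 n)
    have hYtend : Tendsto Y atTop (𝓝 c) := by
      have h1 : Tendsto (fun n : ℕ => c + 1/((n:ℝ)+1)) atTop (𝓝 (c + 0)) :=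
        tendsto_const_nhds.add tendsto_one_div_add_atTop_nhds_zero_nat
      have h2 := (tendsto_const_nhds (x := (1:ℝ)) (f := atTop)).min h1
      rw [add_zero] at h2
      rwa [min_eq_right hc1] at h2
    have hvY : Tendsto (fun n => v (Y n)) atTop (𝓝 (v c)) := by
      have hcw : ContinuousWithinAt v (Icc 0 1) c := hcont c ⟨hc0, hc1⟩
      exact hcw.tendsto.comp (tendsto_nhdsWithin_of_tendsto_nhds_of_eventually_within _ hYtend
        (Eventually.of_forall fun n => ⟨hY0 n, hY1 n⟩))
    have hvc : v c = v 0 := by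
      have h3 : Tendsto (fun _ : ℕ => v 0) atTop (𝓝 (v 0)) := tendsto_const_nhds
      have h4 : (fun n => v (Y n)) = fun _ : ℕ => v 0 := funext hYv
      rw [h4] at hvY
      exact tendsto_nhds_unique hvY h3
    rw [hvc] at hkey
    linarith
  -- the good derivative
  set w' : ℝ → ℝ := (Ioo (0:ℝ) c).indicator v' with hw'def
  have hw'sq : (fun x => (w' x)^2) = (Ioo (0:ℝ) c).indicator (fun x => (v' x)^2) := by
    funext x
    by_cases hx : x ∈ Ioo (0:ℝ) c
    · simp [hw'def, indicator_of_mem hx]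
    · simp [hw'def, indicator_of_notMem hx]
  have hsub : Ioo (0:ℝ) c ⊆ Ioo (0:ℝ) 1 := Ioo_subset_Ioo le_rfl hc1
  have hwint : IntegrableOn w' (Ioo (0:ℝ) 1) := by
    rw [hw'def, IntegrableOn, integrable_indicator_iff measurableSet_Ioo]
    rw [IntegrableOn, Measure.restrict_restrict measurableSet_Ioo, inter_eq_left.2 hsub]
    exact hIoc
  have hwL2 : MemL2 w' := by
    rw [MemL2, hw'sq, IntegrableOn, integrable_indicator_iff measurableSet_Ioo]
    rw [IntegrableOn, Measure.restrict_restrict measurableSet_Ioo, inter_eq_left.2 hsub]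
    exact hv'L2.mono_set hsub
  have hle : L2sq w' ≤ L2sq v' := by
    show ∫ x in Ioo (0:ℝ) 1, (w' x)^2 ≤ ∫ x in Ioo (0:ℝ) 1, (v' x)^2
    rw [hw'sq, setIntegral_indicator measurableSet_Ioo,
      inter_eq_self_of_subset_right hsub]
    refine setIntegral_mono_set hv'L2 (ae_of_all _ fun x => sq_nonneg _) ?_
    exact HasSubset.Subset.eventuallyLE hsub
  have hftcw : ∀ x ∈ Icc (0:ℝ) 1, v x = v 0 + ∫ s in (0:ℝ)..x, w' s := by
    intro x hx
    rw [intervalIntegral.integral_of_le hx.1, hw'def,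
      setIntegral_indicator measurableSet_Ioo]
    rcases lt_or_ge x c with hxc | hcx
    · rw [inter_eq_self_of_subset_left (show Ioc (0:ℝ) x ⊆ Ioo 0 c from fun y hy => ⟨hy.1, lt_of_le_of_lt hy.2 hxc⟩)]
      rw [← intervalIntegral.integral_of_le hx.1]
      exact hftc x hx
    · rw [inter_eq_self_of_subset_right
        (show Ioo (0:ℝ) c ⊆ Ioc 0 x from fun y hy => ⟨hy.1, hy.2.le.trans hcx⟩)]
      rcases eq_or_lt_of_le hcx with heq | hlt
      · rw [← heq]; exact hkey
      · rw [hconst x hlt hx.2, hIoocZero (lt_of_lt_of_le hlt hx.2), add_zero]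
  exact ⟨w', ⟨hftcw, hcont, hvL2, hwL2⟩, hle, hwint⟩

end Stmt9Aux2
section Stmt9Aux3

open MeasureTheory Set Filter Topology intervalIntegral

private lemma sq_sub_le (u w : ℝ) : (u - w)^2 ≤ 2*u^2 + 2*w^2 := by
  nlinarith [sq_nonneg (u + w)]

private lemma kfun_bddBelow (t : ℝ) (ht : 0 ≤ t) (v : ℝ → ℝ) :
    BddBelow {s : ℝ | ∃ v₀ v₁ v₁' : ℝ → ℝ, (∀ x, v x = v₀ x + v₁ x) ∧ MemL2 v₀ ∧
      IsH1 v₁ v₁' ∧ v₁ 0 = 0 ∧ v₁ 1 = 0 ∧ s = L2norm v₀ + t * H1norm v₁ v₁'} := by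
  refine ⟨0, ?_⟩
  rintro s ⟨v₀, v₁, v₁', -, -, -, -, -, rfl⟩
  exact add_nonneg (Real.sqrt_nonneg _) (mul_nonneg ht (Real.sqrt_nonneg _))

set_option maxHeartbeats 4000000 in
private lemma kfun_bound {v w' : ℝ → ℝ} (h : IsH1 v w') (hw : IntegrableOn w' (Ioo (0:ℝ) 1))
    {t : ℝ} (ht : 0 < t) (ht1 : t < 1) :
    Kfun t v ≤ 30 * H1norm v w' * Real.sqrt t := by
  have hM := boundary_bound h hw
  obtain ⟨hftc, hcont, hvL2, hwL2⟩ := h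
  set N := H1norm v w' with hNdef
  have hN0 : 0 ≤ N := Real.sqrt_nonneg _
  set M := max |v 0| |v 1| with hMdef
  have hM0 : 0 ≤ M := le_max_of_le_left (abs_nonneg _)
  have hNsq : N^2 = L2sq v + L2sq w' :=
    Real.sq_sqrt (add_nonneg (L2sq_nonneg v) (L2sq_nonneg w'))
  have hvN : L2sq v ≤ N^2 := by rw [hNsq]; linarith [L2sq_nonneg w']
  have hwN : L2sq w' ≤ N^2 := by rw [hNsq]; linarith [L2sq_nonneg v]
  -- exponential cutoffs
  set q := Real.exp (-1/t) with hqdef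
  have hq0 : 0 < q := Real.exp_pos _
  have hqh : q ≤ 1/2 := by
    have he2 : (2:ℝ) ≤ Real.exp 1 := by
      have := Real.exp_one_gt_d9
      linarith
    have h1 : (-1/t) ≤ -1 := by
      rw [neg_div, neg_le_neg_iff]
      exact one_le_one_div ht ht1.le
    calc q ≤ Real.exp (-1) := Real.exp_le_exp.2 h1
      _ = (Real.exp 1)⁻¹ := by rw [Real.exp_neg]
      _ ≤ (2:ℝ)⁻¹ := by
          apply inv_anti₀ (by norm_num) he2
      _ = 1/2 := by norm_num
  have hDpos : (0:ℝ) < 1 - q^2 := by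
    linarith [mul_le_mul hqh hqh hq0.le (by norm_num : (0:ℝ) ≤ 1/2), sq_nonneg q,
      (pow_two q).symm.le, (pow_two q).le]
  set a := (v 0 - q * v 1)/(1 - q^2) with hadef
  set b := (v 1 - q * v 0)/(1 - q^2) with hbdef
  have hv0M : |v 0| ≤ M := le_max_left _ _
  have hv1M : |v 1| ≤ M := le_max_right _ _
  have ha2 : |a| ≤ 2*M := by
    rw [hadef, abs_div, abs_of_pos hDpos, div_le_iff₀ hDpos]
    have h1 : |v 0 - q * v 1| ≤ M + q * M := by
      calc |v 0 - q * v 1| ≤ |v 0| + |q * v 1| := abs_sub _ _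
        _ = |v 0| + q * |v 1| := by rw [abs_mul, abs_of_pos hq0]
        _ ≤ M + q * M := by
            have := mul_le_mul_of_nonneg_left hv1M hq0.le
            linarith
    linarith [h1, mul_nonneg hM0 (mul_nonneg (by linarith : (0:ℝ) ≤ 1 + q)
      (by linarith : (0:ℝ) ≤ 1 - 2*q))]
  have hb2 : |b| ≤ 2*M := by
    rw [hbdef, abs_div, abs_of_pos hDpos, div_le_iff₀ hDpos]
    have h1 : |v 1 - q * v 0| ≤ M + q * M := by
      calc |v 1 - q * v 0| ≤ |v 1| + |q * v 0| := abs_sub _ _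
        _ = |v 1| + q * |v 0| := by rw [abs_mul, abs_of_pos hq0]
        _ ≤ M + q * M := by
            have := mul_le_mul_of_nonneg_left hv0M hq0.le
            linarith
    linarith [h1, mul_nonneg hM0 (mul_nonneg (by linarith : (0:ℝ) ≤ 1 + q)
      (by linarith : (0:ℝ) ≤ 1 - 2*q))]
  have hasq : a^2 ≤ 4*M^2 := by
    linarith [sq_abs a, mul_le_mul ha2 ha2 (abs_nonneg a) (by linarith : (0:ℝ) ≤ 2*M)]
  have hbsq : b^2 ≤ 4*M^2 := by
    linarith [sq_abs b, mul_le_mul hb2 hb2 (abs_nonneg b) (by linarith : (0:ℝ) ≤ 2*M)]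
  have hMN : M^2 ≤ 9*N^2 := by
    linarith [mul_le_mul hM hM hM0 (by linarith : (0:ℝ) ≤ 3*N)]
  -- the cutoff functions
  set p : ℝ → ℝ := fun x => Real.exp (-x/t) with hpdef
  set r : ℝ → ℝ := fun x => Real.exp (-(1-x)/t) with hrdef
  set g : ℝ → ℝ := fun x => a * p x + b * r x with hgdef
  set g' : ℝ → ℝ := fun x => -(a/t) * p x + (b/t) * r x with hg'def
  have hpc : Continuous p := by
    rw [hpdef]; exact Real.continuous_exp.comp ((continuous_id.neg).div_const t)
  have hrc : Continuous r := by
    rw [hrdef]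
    exact Real.continuous_exp.comp (((continuous_const.sub continuous_id).neg).div_const t)
  have hgc : Continuous g := by
    rw [hgdef]; exact (continuous_const.mul hpc).add (continuous_const.mul hrc)
  have hg'c : Continuous g' := by
    rw [hg'def]; exact (continuous_const.mul hpc).add (continuous_const.mul hrc)
  have hpd : ∀ x, HasDerivAt p (p x * (-1/t)) x := by
    intro x
    have h1 : HasDerivAt (fun y : ℝ => -y/t) (-1/t) x := by
      simpa using (hasDerivAt_id x).neg.div_const t
    exact h1.exp
  have hrd : ∀ x, HasDerivAt r (r x * (1/t)) x := by
    intro x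
    have h1 : HasDerivAt (fun y : ℝ => -(1-y)/t) (1/t) x := by
      have h2 : HasDerivAt (fun y : ℝ => -(1-y)) (1:ℝ) x := by
        exact (((hasDerivAt_const x (1:ℝ)).sub (hasDerivAt_id x)).neg).congr_deriv (by simp)
      simpa using h2.div_const t
    exact h1.exp
  have hgd : ∀ x, HasDerivAt g (g' x) x := by
    intro x
    have h1 := ((hpd x).const_mul a).add ((hrd x).const_mul b)
    rw [hgdef, hg'def]
    refine h1.congr_deriv ?_
    show a * (p x * (-1/t)) + b * (r x * (1/t)) = -(a/t) * p x + b/t * r x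
    field_simp
    try ring
  have hp0 : p 0 = 1 := by rw [hpdef]; norm_num
  have hr0 : r 0 = q := by rw [hrdef, hqdef]; norm_num
  have hp1 : p 1 = q := by rw [hpdef, hqdef]
  have hr1 : r 1 = 1 := by rw [hrdef]; norm_num
  have hg0 : g 0 = v 0 := by
    rw [hgdef]
    simp only [hp0, hr0, hadef, hbdef]
    field_simp
    ring
  have hg1 : g 1 = v 1 := by
    rw [hgdef]
    simp only [hp1, hr1, hadef, hbdef]
    field_simp
    ring
  -- integrals of p², r²
  have hpint : ∫ x in Ioo (0:ℝ) 1, (p x)^2 ≤ t/2 := by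
    rw [← MeasureTheory.integral_Ioc_eq_integral_Ioo,
      ← intervalIntegral.integral_of_le zero_le_one]
    have hF : ∀ x ∈ uIcc (0:ℝ) 1, HasDerivAt (fun y => -(t/2) * (p y)^2) ((p x)^2) x := by
      intro x _
      have h1 := ((hpd x).pow 2).const_mul (-(t/2))
      refine h1.congr_deriv ?_
      field_simp
      ring
    calc ∫ x in (0:ℝ)..1, (p x)^2
        = -(t/2) * (p 1)^2 - (-(t/2) * (p 0)^2) :=
          intervalIntegral.integral_eq_sub_of_hasDerivAt hF ((hpc.pow 2).intervalIntegrable 0 1)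
      _ ≤ t/2 := by rw [hp1, hp0]; linarith [mul_nonneg ht.le (sq_nonneg q)]
  have hrint : ∫ x in Ioo (0:ℝ) 1, (r x)^2 ≤ t/2 := by
    rw [← MeasureTheory.integral_Ioc_eq_integral_Ioo,
      ← intervalIntegral.integral_of_le zero_le_one]
    have hF : ∀ x ∈ uIcc (0:ℝ) 1, HasDerivAt (fun y => (t/2) * (r y)^2) ((r x)^2) x := by
      intro x _
      have h1 := ((hrd x).pow 2).const_mul (t/2)
      refine h1.congr_deriv ?_
      field_simp
      ring
    calc ∫ x in (0:ℝ)..1, (r x)^2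
        = (t/2) * (r 1)^2 - ((t/2) * (r 0)^2) :=
          intervalIntegral.integral_eq_sub_of_hasDerivAt hF ((hrc.pow 2).intervalIntegrable 0 1)
      _ ≤ t/2 := by rw [hr1, hr0]; linarith [mul_nonneg ht.le (sq_nonneg q)]
  have hpint0 : 0 ≤ ∫ x in Ioo (0:ℝ) 1, (p x)^2 :=
    MeasureTheory.integral_nonneg fun _ => sq_nonneg _
  have hrint0 : 0 ≤ ∫ x in Ioo (0:ℝ) 1, (r x)^2 :=
    MeasureTheory.integral_nonneg fun _ => sq_nonneg _
  -- L² bounds for g and g'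
  have hgL2 : L2sq g ≤ 72 * N^2 * t := by
    have hcalc : L2sq g ≤ 2*a^2 * (∫ x in Ioo (0:ℝ) 1, (p x)^2)
        + 2*b^2 * (∫ x in Ioo (0:ℝ) 1, (r x)^2) := by
      show ∫ x in Ioo (0:ℝ) 1, (g x)^2 ≤ _
      have hi1 : IntegrableOn (fun x => 2*a^2*(p x)^2 + 2*b^2*(r x)^2) (Ioo (0:ℝ) 1) :=
        ((contIntOn (f := fun x => (p x)^2) (hpc.pow 2)).const_mul (2*a^2)).add
          ((contIntOn (f := fun x => (r x)^2) (hrc.pow 2)).const_mul (2*b^2))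
      calc ∫ x in Ioo (0:ℝ) 1, (g x)^2
          ≤ ∫ x in Ioo (0:ℝ) 1, (2*a^2*(p x)^2 + 2*b^2*(r x)^2) := by
            refine setIntegral_mono_on (contIntOn (f := fun x => (g x)^2) (hgc.pow 2)) hi1 measurableSet_Ioo
              fun x _ => ?_
            rw [hgdef]
            show (a * p x + b * r x)^2 ≤ 2*a^2*(p x)^2 + 2*b^2*(r x)^2
            nlinarith [sq_nonneg (a * p x - b * r x)]
        _ = _ := by
            rw [MeasureTheory.integral_add ((contIntOn (f := fun x => (p x)^2) (hpc.pow 2)).const_mul (2*a^2))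
              ((contIntOn (f := fun x => (r x)^2) (hrc.pow 2)).const_mul (2*b^2)),
              MeasureTheory.integral_const_mul, MeasureTheory.integral_const_mul]
    have h1 : 2*a^2 * (∫ x in Ioo (0:ℝ) 1, (p x)^2) ≤ 2*a^2 * (t/2) :=
      mul_le_mul_of_nonneg_left hpint (by positivity)
    have h2 : 2*b^2 * (∫ x in Ioo (0:ℝ) 1, (r x)^2) ≤ 2*b^2 * (t/2) :=
      mul_le_mul_of_nonneg_left hrint (by positivity)
    linarith [hcalc, h1, h2, mul_le_mul_of_nonneg_right hasq ht.le,
      mul_le_mul_of_nonneg_right hbsq ht.le, mul_le_mul_of_nonneg_right hMN ht.le]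
  have hg'L2 : L2sq g' ≤ 72 * N^2 / t := by
    have hcalc : L2sq g' ≤ 2*(a/t)^2 * (∫ x in Ioo (0:ℝ) 1, (p x)^2)
        + 2*(b/t)^2 * (∫ x in Ioo (0:ℝ) 1, (r x)^2) := by
      show ∫ x in Ioo (0:ℝ) 1, (g' x)^2 ≤ _
      have hi1 : IntegrableOn (fun x => 2*(a/t)^2*(p x)^2 + 2*(b/t)^2*(r x)^2) (Ioo (0:ℝ) 1) :=
        ((contIntOn (f := fun x => (p x)^2) (hpc.pow 2)).const_mul (2*(a/t)^2)).add
          ((contIntOn (f := fun x => (r x)^2) (hrc.pow 2)).const_mul (2*(b/t)^2))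
      calc ∫ x in Ioo (0:ℝ) 1, (g' x)^2
          ≤ ∫ x in Ioo (0:ℝ) 1, (2*(a/t)^2*(p x)^2 + 2*(b/t)^2*(r x)^2) := by
            refine setIntegral_mono_on (contIntOn (f := fun x => (g' x)^2) (hg'c.pow 2)) hi1 measurableSet_Ioo
              fun x _ => ?_
            rw [hg'def]
            show (-(a/t) * p x + (b/t) * r x)^2 ≤ 2*(a/t)^2*(p x)^2 + 2*(b/t)^2*(r x)^2
            nlinarith [sq_nonneg ((a/t) * p x + (b/t) * r x)]
        _ = _ := by
            rw [MeasureTheory.integral_add ((contIntOn (f := fun x => (p x)^2) (hpc.pow 2)).const_mul (2*(a/t)^2))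
              ((contIntOn (f := fun x => (r x)^2) (hrc.pow 2)).const_mul (2*(b/t)^2)),
              MeasureTheory.integral_const_mul, MeasureTheory.integral_const_mul]
    have heq : 2*(a/t)^2 * (t/2) + 2*(b/t)^2 * (t/2) = (a^2 + b^2)/t := by
      field_simp
    have h1 : 2*(a/t)^2 * (∫ x in Ioo (0:ℝ) 1, (p x)^2) ≤ 2*(a/t)^2 * (t/2) :=
      mul_le_mul_of_nonneg_left hpint (by positivity)
    have h2 : 2*(b/t)^2 * (∫ x in Ioo (0:ℝ) 1, (r x)^2) ≤ 2*(b/t)^2 * (t/2) :=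
      mul_le_mul_of_nonneg_left hrint (by positivity)
    have h3 : (a^2 + b^2)/t ≤ 72 * N^2 / t := by
      rw [div_le_div_iff_of_pos_right ht]
      linarith [hasq, hbsq, hMN]
    linarith [hcalc, h1, h2, h3, heq]
  -- the decomposition
  clear_value q a b p r g g'
  set v₁ : ℝ → ℝ := fun x => v x - g x with hv₁def
  set v₁' : ℝ → ℝ := fun x => w' x - g' x with hv₁'def
  clear_value v₁ v₁'
  have hv1cont : ContinuousOn v₁ (Icc (0:ℝ) 1) := by
    rw [hv₁def]; exact hcont.sub hgc.continuousOn
  have hv1L2 : MemL2 v₁ := contOnIntOn (hv1cont.pow 2)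
  have hv1'int : IntegrableOn (fun x => (v₁' x)^2) (Ioo (0:ℝ) 1) := by
    have hmeas : AEStronglyMeasurable v₁' (volume.restrict (Ioo (0:ℝ) 1)) := by
      rw [hv₁'def]
      exact hw.1.sub hg'c.aestronglyMeasurable
    have hm2 : AEStronglyMeasurable (fun x => (v₁' x)^2) (volume.restrict (Ioo (0:ℝ) 1)) := by
      exact hmeas.pow 2
    have hgb : IntegrableOn (fun x => 2*(w' x)^2 + 2*(g' x)^2) (Ioo (0:ℝ) 1) :=
      (hwL2.const_mul 2).add ((contIntOn (f := fun x => (g' x)^2) (hg'c.pow 2)).const_mul 2)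
    refine Integrable.mono' hgb hm2 (ae_of_all _ fun x => ?_)
    rw [Real.norm_eq_abs, abs_of_nonneg (sq_nonneg _)]
    simp only [hv₁'def]
    exact sq_sub_le _ _
  have hwiix : ∀ x ∈ Icc (0:ℝ) 1, IntervalIntegrable w' volume 0 x := by
    intro x hx
    rw [intervalIntegrable_iff_integrableOn_Ioc_of_le hx.1,
      integrableOn_Ioc_iff_integrableOn_Ioo]
    exact hw.mono_set (Ioo_subset_Ioo le_rfl hx.2)
  have hgftc : ∀ x ∈ Icc (0:ℝ) 1, g x = g 0 + ∫ s in (0:ℝ)..x, g' s := by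
    intro x _
    rw [intervalIntegral.integral_eq_sub_of_hasDerivAt (fun y _ => hgd y)
      (hg'c.intervalIntegrable 0 x)]
    ring
  have hv1H1 : IsH1 v₁ v₁' := by
    refine ⟨?_, hv1cont, hv1L2, hv1'int⟩
    intro x hx
    simp only [hv₁def, hv₁'def]
    rw [intervalIntegral.integral_sub (hwiix x hx) (hg'c.intervalIntegrable 0 x)]
    have h1 := hftc x hx
    have h2 := hgftc x hx
    linarith
  have hv1L2b : L2sq v₁ ≤ 2 * L2sq v + 2 * L2sq g := by
    show ∫ x in Ioo (0:ℝ) 1, (v₁ x)^2 ≤ _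
    have hi2 : IntegrableOn (fun x => 2*(v x)^2 + 2*(g x)^2) (Ioo (0:ℝ) 1) :=
      (hvL2.const_mul 2).add ((contIntOn (f := fun x => (g x)^2) (hgc.pow 2)).const_mul 2)
    calc ∫ x in Ioo (0:ℝ) 1, (v₁ x)^2
        ≤ ∫ x in Ioo (0:ℝ) 1, (2*(v x)^2 + 2*(g x)^2) := by
          refine setIntegral_mono_on (contOnIntOn (hv1cont.pow 2)) hi2 measurableSet_Ioo
            fun x _ => ?_
          simp only [hv₁def]
          exact sq_sub_le _ _
      _ = 2 * L2sq v + 2 * L2sq g := by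
          rw [MeasureTheory.integral_add (hvL2.const_mul 2)
            ((contIntOn (f := fun x => (g x)^2) (hgc.pow 2)).const_mul 2),
            MeasureTheory.integral_const_mul, MeasureTheory.integral_const_mul]
          rfl
  have hv1'L2b : L2sq v₁' ≤ 2 * L2sq w' + 2 * L2sq g' := by
    show ∫ x in Ioo (0:ℝ) 1, (v₁' x)^2 ≤ _
    have hi2 : IntegrableOn (fun x => 2*(w' x)^2 + 2*(g' x)^2) (Ioo (0:ℝ) 1) :=
      (hwL2.const_mul 2).add ((contIntOn (f := fun x => (g' x)^2) (hg'c.pow 2)).const_mul 2)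
    calc ∫ x in Ioo (0:ℝ) 1, (v₁' x)^2
        ≤ ∫ x in Ioo (0:ℝ) 1, (2*(w' x)^2 + 2*(g' x)^2) := by
          refine setIntegral_mono_on hv1'int hi2 measurableSet_Ioo fun x _ => ?_
          simp only [hv₁'def]
          exact sq_sub_le _ _
      _ = 2 * L2sq w' + 2 * L2sq g' := by
          rw [MeasureTheory.integral_add (hwL2.const_mul 2)
            ((contIntOn (f := fun x => (g' x)^2) (hg'c.pow 2)).const_mul 2),
            MeasureTheory.integral_const_mul, MeasureTheory.integral_const_mul]
          rfl
  have hv10 : v₁ 0 = 0 := by simp only [hv₁def]; rw [hg0]; ring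
  have hv11 : v₁ 1 = 0 := by simp only [hv₁def]; rw [hg1]; ring
  have hmem : L2norm g + t * H1norm v₁ v₁' ∈ {s : ℝ | ∃ u₀ u₁ u₁' : ℝ → ℝ,
      (∀ x, v x = u₀ x + u₁ x) ∧ MemL2 u₀ ∧ IsH1 u₁ u₁' ∧ u₁ 0 = 0 ∧ u₁ 1 = 0 ∧
      s = L2norm u₀ + t * H1norm u₁ u₁'} :=
    ⟨g, v₁, v₁', fun x => by simp only [hv₁def]; ring,
      contIntOn (f := fun x => (g x)^2) (hgc.pow 2), hv1H1, hv10, hv11, rfl⟩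
  have hKle : Kfun t v ≤ L2norm g + t * H1norm v₁ v₁' :=
    csInf_le (kfun_bddBelow t ht.le v) hmem
  have hst0 : 0 < Real.sqrt t := Real.sqrt_pos.2 ht
  have hsq : Real.sqrt t ^ 2 = t := Real.sq_sqrt ht.le
  have hL2g : L2norm g ≤ 9 * N * Real.sqrt t := by
    show Real.sqrt (L2sq g) ≤ _
    apply sqrt_le_of_sq_le (by positivity)
    calc L2sq g ≤ 72*N^2*t := hgL2
      _ ≤ (9*N*Real.sqrt t)^2 := by
          rw [mul_pow, mul_pow, hsq]
          linarith [mul_nonneg (sq_nonneg N) ht.le]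
  have hH1 : H1norm v₁ v₁' ≤ 21 * N / Real.sqrt t := by
    show Real.sqrt (L2sq v₁ + L2sq v₁') ≤ _
    apply sqrt_le_of_sq_le (by positivity)
    rw [div_pow, hsq, le_div_iff₀ ht]
    have e1 : L2sq g' * t ≤ 72 * N^2 := by
      have h9 := mul_le_mul_of_nonneg_right hg'L2 ht.le
      rwa [div_mul_cancel₀ _ ht.ne'] at h9
    have hN2t : N^2 * t ≤ N^2 := mul_le_of_le_one_right (sq_nonneg N) ht1.le
    have htt : t * t ≤ 1 := mul_le_one₀ ht1.le ht.le ht1.le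
    have hgt : L2sq g * t ≤ 72 * N^2 := by
      have h9 : L2sq g * t ≤ (72*N^2*t) * t := mul_le_mul_of_nonneg_right hgL2 ht.le
      have h10 : (72*N^2) * (t*t) ≤ (72*N^2) * 1 :=
        mul_le_mul_of_nonneg_left htt (by positivity)
      linarith
    have ha9 : L2sq v₁ * t ≤ (2 * L2sq v + 2 * L2sq g) * t :=
      mul_le_mul_of_nonneg_right hv1L2b ht.le
    have hb9 : L2sq v₁' * t ≤ (2 * L2sq w' + 2 * L2sq g') * t :=
      mul_le_mul_of_nonneg_right hv1'L2b ht.le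
    have hc9 : L2sq v * t ≤ N^2 * t := mul_le_mul_of_nonneg_right hvN ht.le
    have hd9 : L2sq w' * t ≤ N^2 * t := mul_le_mul_of_nonneg_right hwN ht.le
    linarith [sq_nonneg N, e1]
  have hfin : t * H1norm v₁ v₁' ≤ 21 * N * Real.sqrt t := by
    calc t * H1norm v₁ v₁' ≤ t * (21 * N / Real.sqrt t) :=
        mul_le_mul_of_nonneg_left hH1 ht.le
      _ = 21 * N * (t / Real.sqrt t) := by ring
      _ = 21 * N * Real.sqrt t := by rw [Real.div_sqrt]
  calc Kfun t v ≤ L2norm g + t * H1norm v₁ v₁' := hKle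
    _ ≤ 9*N*Real.sqrt t + 21*N*Real.sqrt t := add_le_add hL2g hfin
    _ = 30 * N * Real.sqrt t := by ring

end Stmt9Aux3
/-- continuous inclusion `H¹(I) ⊆ H^{1/2,∞}(I)`,
[Lions–Magenes, Ch. 2, §5, Lemma 5.2]: there is `C > 0` such that every `v ∈ H¹(I)`
belongs to `H^{1/2,∞}(I)` with `‖v‖_{1/2,∞} ≤ C ‖v‖_{H¹(I)}`. -/
theorem stmt9 :
    ∃ C : ℝ, 0 < C ∧
      ∀ v v' : ℝ → ℝ, IsH1 v v' →
        MemHhalf v ∧ HhalfNorm v ≤ C * H1norm v v' := by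
  refine ⟨30, by norm_num, fun v v' hv => ?_⟩
  obtain ⟨w', hw1, hwle, hwint⟩ := exists_good_deriv hv
  have hNle : H1norm v w' ≤ H1norm v v' := Real.sqrt_le_sqrt (by linarith)
  have hN0 : 0 ≤ H1norm v v' := Real.sqrt_nonneg _
  have hz : MemL2 (fun _ : ℝ => (0:ℝ)) := by
    show IntegrableOn (fun _ : ℝ => (0:ℝ)^2) (Ioo (0:ℝ) 1) volume
    exact integrableOn_const measure_Ioo_lt_top.ne
  have hzH1 : IsH1 (fun _ : ℝ => (0:ℝ)) (fun _ : ℝ => (0:ℝ)) := by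
    refine ⟨fun x _ => ?_, continuousOn_const, hz, hz⟩
    simp
  have key : ∀ t : ℝ, 0 < t → Kfun t v ≤ 30 * H1norm v v' * Real.sqrt t := by
    intro t ht
    rcases lt_or_ge t 1 with h1 | h1
    · have h2 := kfun_bound hw1 hwint ht h1
      have h3 : 30 * H1norm v w' * Real.sqrt t ≤ 30 * H1norm v v' * Real.sqrt t :=
        mul_le_mul_of_nonneg_right (mul_le_mul_of_nonneg_left hNle (by norm_num))
          (Real.sqrt_nonneg t)
      linarith
    · have hmem : L2norm v ∈ {s : ℝ | ∃ v₀ v₁ v₁' : ℝ → ℝ, (∀ x, v x = v₀ x + v₁ x) ∧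
          MemL2 v₀ ∧ IsH1 v₁ v₁' ∧ v₁ 0 = 0 ∧ v₁ 1 = 0 ∧
          s = L2norm v₀ + t * H1norm v₁ v₁'} := by
        refine ⟨v, fun _ => 0, fun _ => 0, fun x => by ring, hv.2.2.1, hzH1, rfl, rfl, ?_⟩
        have hz2 : L2sq (fun _ : ℝ => (0:ℝ)) = 0 := by
          simp [L2sq]
        show L2norm v = L2norm v
          + t * Real.sqrt (L2sq (fun _ : ℝ => (0:ℝ)) + L2sq (fun _ : ℝ => (0:ℝ)))
        rw [hz2]
        simp
      have hKle : Kfun t v ≤ L2norm v := csInf_le (kfun_bddBelow t ht.le v) hmem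
      have hvle : L2norm v ≤ H1norm v v' :=
        Real.sqrt_le_sqrt (le_add_of_nonneg_right (L2sq_nonneg _))
      have hst : 1 ≤ Real.sqrt t := by
        rw [show (1:ℝ) = Real.sqrt 1 from Real.sqrt_one.symm]
        exact Real.sqrt_le_sqrt h1
      have h4 : 30 * H1norm v v' * 1 ≤ 30 * H1norm v v' * Real.sqrt t :=
        mul_le_mul_of_nonneg_left hst (by positivity)
      linarith
  constructor
  · refine ⟨30 * H1norm v v', ?_⟩
    rintro s ⟨t, ht, rfl⟩
    rw [div_le_iff₀ (Real.sqrt_pos.2 ht)]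
    exact key t ht
  · refine csSup_le ⟨Kfun 1 v / Real.sqrt 1, 1, one_pos, rfl⟩ ?_
    rintro s ⟨t, ht, rfl⟩
    rw [div_le_iff₀ (Real.sqrt_pos.2 ht)]
    exact key t ht
end

section
/- Let 0 < δ < 1 and L ∈ ℕ, set μ_{ℓ,δ} = min(2^{−ℓ} δ^{−1}, 1) for ℓ = 0,…,L, and let P_{ℓ,L} ∈ ℝ^{2^L × 2^ℓ} be the prolongation matrices with entries (P_{ℓ,L})_{i,j} = 2^{(ℓ−L)/2} max(0, 1 − 2^ℓ |i 2^{−L} − j 2^{−ℓ}|), i = 1,…,2^L, j = 1,…,2^ℓ. Then the preconditioner matrix C_L = Σ_{ℓ=0}^{L} μ_{ℓ,δ} P_{ℓ,L} P_{ℓ,L}^T ∈ ℝ^{2^L × 2^L} admits a matrix QTT decomposition with all ranks equal to 8. -/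
open MeasureTheory Set Polynomial

/-- The prolongation matrix `P_{ℓ,L} ∈ ℝ^{2^L × 2^ℓ}` (indices starting from 1),
`(P_{ℓ,L})_{i,j} = 2^{(ℓ-L)/2} max(0, 1 - 2^ℓ|i2^{-L} - j2^{-ℓ}|)`. -/
noncomputable def Pmat (L ℓ : ℕ) : Matrix (Fin (2^L)) (Fin (2^ℓ)) ℝ :=
  fun i j => (2:ℝ) ^ (((ℓ:ℝ) - (L:ℝ)) / 2) *
    max 0 (1 - (2:ℝ)^ℓ * |(((i:ℕ):ℝ) + 1) / 2^L - (((j:ℕ):ℝ) + 1) / 2^ℓ|)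

/-- The coefficients `μ_{ℓ,δ} = min(2^{-ℓ}δ^{-1}, 1)`. -/
noncomputable def muCoeff (δ : ℝ) (ℓ : ℕ) : ℝ := min ((2:ℝ)^(-(ℓ:ℤ)) * δ⁻¹) 1

/-- The BPX-type preconditioner `C_L = Σ_{ℓ=0}^L μ_{ℓ,δ} P_{ℓ,L} P_{ℓ,L}ᵀ`. -/
noncomputable def precondC (δ : ℝ) (L : ℕ) : Matrix (Fin (2^L)) (Fin (2^L)) ℝ :=
  ∑ ℓ ∈ Finset.range (L+1), (muCoeff δ ℓ) • (Pmat L ℓ * (Pmat L ℓ).transpose)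

namespace Stmt18aux

noncomputable def ind (P : Prop) [Decidable P] : ℝ := if P then 1 else 0

lemma ind_congr {P Q : Prop} [Decidable P] [Decidable Q] (h : P ↔ Q) : ind P = ind Q := by
  simp [ind]; by_cases hP : P <;> simp [hP, h.symm, (h.not).symm] <;> tauto

lemma ind_true {P : Prop} [Decidable P] (h : P) : ind P = 1 := by simp [ind, h]
lemma ind_false {P : Prop} [Decidable P] (h : ¬ P) : ind P = 0 := by simp [ind, h]

lemma ind_mul_ind (P Q : Prop) [Decidable P] [Decidable Q] :
    ind P * ind Q = ind (P ∧ Q) := by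
  by_cases hP : P <;> by_cases hQ : Q <;> simp [ind, hP, hQ]

/-- prefix value: first `n` bits of `i` (length-`L` index). -/
def Av (L n i : ℕ) : ℕ := i / 2^(L-n)

/-- fractional coordinate of `i` within its level-`n` cell. -/
noncomputable def Tv (L n i : ℕ) : ℝ := ((i % 2^(L-n) : ℕ) + 1) / 2^(L-n)

/-- the digit read by core `n` (bit `n+1`). -/
def dg (L n i : ℕ) : ℕ := i / 2^(L-1-n) % 2

lemma dg_lt (L n i : ℕ) : dg L n i < 2 := Nat.mod_lt _ (by norm_num)

lemma Av_zero (L i : ℕ) (hi : i < 2^L) : Av L 0 i = 0 := by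
  simp [Av, Nat.div_eq_of_lt hi]

lemma Av_lt (L n i : ℕ) (hn : n ≤ L) (hi : i < 2^L) : Av L n i < 2^n := by
  unfold Av
  rw [Nat.div_lt_iff_lt_mul (pow_pos (by norm_num) _), ← pow_add]
  have : n + (L - n) = L := by omega
  rwa [this]

lemma Av_succ (L n i : ℕ) (hn : n < L) : Av L (n+1) i = 2 * Av L n i + dg L n i := by
  unfold Av dg
  have h1 : L - n = (L - 1 - n) + 1 := by omega
  have h2 : L - (n+1) = L - 1 - n := by omega
  rw [h1, h2, pow_succ, ← Nat.div_div_eq_div_mul]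
  omega

lemma Tv_pos (L n i : ℕ) : 0 < Tv L n i := by
  unfold Tv; positivity

lemma Tv_le_one (L n i : ℕ) : Tv L n i ≤ 1 := by
  unfold Tv
  rw [div_le_one (by positivity)]
  have h : i % 2^(L-n) + 1 ≤ 2^(L-n) := Nat.mod_lt _ (pow_pos (by norm_num) _)
  have : ((i % 2^(L-n) + 1 : ℕ) : ℝ) ≤ ((2^(L-n) : ℕ) : ℝ) := Nat.cast_le.2 h
  push_cast at this
  linarith

lemma Av_add_Tv (L n i : ℕ) : (Av L n i : ℝ) + Tv L n i = ((i:ℝ) + 1) / 2^(L-n) := by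
  unfold Av Tv
  have h := Nat.div_add_mod i (2^(L-n))
  have hN : (0:ℝ) < 2^(L-n) := by positivity
  field_simp
  have : ((2^(L-n) * (i / 2^(L-n)) + i % 2^(L-n) : ℕ) : ℝ) = (i:ℝ) := by rw [h]
  push_cast at this
  linarith

lemma Tv_succ (L n i : ℕ) (hn : n < L) :
    Tv L n i = ((dg L n i : ℝ) + Tv L (n+1) i) / 2 := by
  unfold Tv dg
  have h1 : L - n = (L - 1 - n) + 1 := by omega
  have h2 : L - (n+1) = L - 1 - n := by omega
  rw [h1, h2]
  have hmod : i % 2^((L-1-n)+1) = i % 2^(L-1-n) + 2^(L-1-n) * (i / 2^(L-1-n) % 2) := by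
    rw [pow_succ]; exact Nat.mod_mul
  rw [hmod]
  have hN : (0:ℝ) < 2^(L-1-n) := by positivity
  push_cast
  rw [pow_succ]
  field_simp
  ring

lemma Tv_last (L i : ℕ) : Tv L L i = 1 := by
  simp [Tv, Nat.mod_one]

noncomputable def Ff (L ℓ i m : ℕ) : ℝ :=
  ind (Av L ℓ i = Av L ℓ m ∧ 1 ≤ Av L ℓ i) * ((1 - Tv L ℓ i) * (1 - Tv L ℓ m))
  + ind (Av L ℓ i = Av L ℓ m + 1) * ((1 - Tv L ℓ i) * Tv L ℓ m)
  + ind (Av L ℓ m = Av L ℓ i + 1) * (Tv L ℓ i * (1 - Tv L ℓ m))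
  + ind (Av L ℓ i = Av L ℓ m) * (Tv L ℓ i * Tv L ℓ m)

noncomputable def cc (δ : ℝ) (L ℓ : ℕ) : ℝ := muCoeff δ ℓ * 2^ℓ / 2^L

lemma Pmat_apply (L ℓ : ℕ) (hℓ : ℓ ≤ L) (i : Fin (2^L)) (j : Fin (2^ℓ)) :
    Pmat L ℓ i j = (2:ℝ) ^ (((ℓ:ℝ) - (L:ℝ)) / 2) *
      (ind (1 ≤ Av L ℓ (i:ℕ)) * ind ((j:ℕ) = Av L ℓ (i:ℕ) - 1) * (1 - Tv L ℓ (i:ℕ))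
        + ind ((j:ℕ) = Av L ℓ (i:ℕ)) * Tv L ℓ (i:ℕ)) := by
  have hpos2 : (0:ℝ) < (2:ℝ)^ℓ := by positivity
  set a := Av L ℓ (i:ℕ) with hadef
  set t := Tv L ℓ (i:ℕ) with htdef
  have ht0 : 0 < t := Tv_pos L ℓ (i:ℕ)
  have ht1 : t ≤ 1 := Tv_le_one L ℓ (i:ℕ)
  have hat : (a:ℝ) + t = (((i:ℕ):ℝ) + 1) / 2^(L-ℓ) := Av_add_Tv L ℓ (i:ℕ)
  unfold Pmat
  congr 1
  have hpow : (2:ℝ)^L = 2^ℓ * 2^(L-ℓ) := by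
    rw [← pow_add]; congr 1; omega
  have h2 : (2:ℝ)^ℓ * ((((i:ℕ):ℝ)+1)/2^L - (((j:ℕ):ℝ)+1)/2^ℓ) =
      (a:ℝ) + t - (((j:ℕ):ℝ)+1) := by
    rw [hat, hpow]
    have hN : (0:ℝ) < 2^(L-ℓ) := by positivity
    field_simp
  have habs : (2:ℝ)^ℓ * |(((i:ℕ):ℝ)+1)/2^L - (((j:ℕ):ℝ)+1)/2^ℓ| =
      |(a:ℝ) + t - (((j:ℕ):ℝ)+1)| := by
    rw [← h2, abs_mul, abs_of_pos hpos2]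
  rw [habs]
  by_cases hja : (j:ℕ) + 1 = a
  · have h1a : 1 ≤ a := by omega
    rw [ind_true h1a, ind_true (show (j:ℕ) = a - 1 by omega),
      ind_false (show ¬ (j:ℕ) = a by omega)]
    have hr : ((j:ℕ):ℝ) + 1 = (a:ℝ) := by exact_mod_cast congrArg (Nat.cast (R := ℝ)) hja
    rw [show (a:ℝ) + t - (((j:ℕ):ℝ)+1) = t by rw [hr]; ring]
    rw [abs_of_pos ht0, max_eq_right (by linarith)]
    ring
  · by_cases hja2 : (j:ℕ) = a
    · have hz : ind (1 ≤ a) * ind ((j:ℕ) = a - 1) = 0 := by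
        by_cases h1a : 1 ≤ a
        · rw [ind_false (show ¬ (j:ℕ) = a - 1 by omega)]; ring
        · rw [ind_false h1a]; ring
      rw [ind_true hja2]
      have hr : ((j:ℕ):ℝ) = (a:ℝ) := by exact_mod_cast congrArg (Nat.cast (R := ℝ)) hja2
      rw [show (a:ℝ) + t - (((j:ℕ):ℝ)+1) = t - 1 by rw [hr]; ring]
      rw [abs_of_nonpos (by linarith), max_eq_right (by linarith)]
      calc 1 - -(t-1) = t := by ring
      _ = ind (1 ≤ a) * ind ((j:ℕ) = a - 1) * (1-t) + 1 * t := by rw [hz]; ring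
    · rcases Nat.lt_or_ge (j:ℕ) a with hlt | hge
      · have hj2 : (j:ℕ) + 2 ≤ a := by omega
        rw [ind_false (show ¬ (j:ℕ) = a - 1 by omega), ind_false hja2]
        have hr : ((j:ℕ):ℝ) + 2 ≤ (a:ℝ) := by exact_mod_cast Nat.cast_le.2 hj2
        have harg : 1 + t ≤ (a:ℝ) + t - (((j:ℕ):ℝ)+1) := by linarith
        rw [abs_of_pos (by linarith), max_eq_left (by linarith)]
        ring
      · have hj2 : a + 1 ≤ (j:ℕ) := by omega
        rw [ind_false (show ¬ (j:ℕ) = a - 1 by omega), ind_false hja2]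
        have hr : (a:ℝ) + 1 ≤ ((j:ℕ):ℝ) := by exact_mod_cast Nat.cast_le.2 hj2
        have harg : (a:ℝ) + t - (((j:ℕ):ℝ)+1) ≤ t - 2 := by linarith
        rw [abs_of_nonpos (by linarith), max_eq_left (by linarith)]
        ring

lemma sum_delta2 {n : ℕ} (p q : ℕ) (C : ℝ) :
    ∑ j : Fin n, ind ((j:ℕ) = p) * ind ((j:ℕ) = q) * C = ind (p = q ∧ p < n) * C := by
  by_cases h : p = q ∧ p < n
  · obtain ⟨rfl, hp⟩ := h
    rw [ind_true ⟨rfl, hp⟩]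
    rw [Finset.sum_eq_single (⟨p, hp⟩ : Fin n)]
    · simp [ind]
    · intro j _ hj
      have : (j:ℕ) ≠ p := fun hc => hj (Fin.ext hc)
      simp [ind_false this]
    · simp
  · rw [ind_false h, zero_mul]
    apply Finset.sum_eq_zero
    intro j _
    by_cases h1 : (j:ℕ) = p
    · by_cases h2 : (j:ℕ) = q
      · exact absurd ⟨h1 ▸ h2.symm ▸ rfl, h1 ▸ j.isLt⟩ h
      · simp [ind_false h2]
    · simp [ind_false h1]

lemma PPT (L ℓ : ℕ) (hℓ : ℓ ≤ L) (i m : Fin (2^L)) :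
    (Pmat L ℓ * (Pmat L ℓ).transpose) i m = 2^ℓ / 2^L * Ff L ℓ (i:ℕ) (m:ℕ) := by
  have ha : Av L ℓ (i:ℕ) < 2^ℓ := Av_lt L ℓ (i:ℕ) hℓ i.isLt
  have hb : Av L ℓ (m:ℕ) < 2^ℓ := Av_lt L ℓ (m:ℕ) hℓ m.isLt
  set a := Av L ℓ (i:ℕ) with hadef
  set b := Av L ℓ (m:ℕ) with hbdef
  set t := Tv L ℓ (i:ℕ) with htdef
  set s := Tv L ℓ (m:ℕ) with hsdef
  have hC : (2:ℝ) ^ (((ℓ:ℝ) - (L:ℝ))/2) * (2:ℝ) ^ (((ℓ:ℝ) - (L:ℝ))/2) = 2^ℓ / 2^L := by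
    rw [← Real.rpow_add (by norm_num : (0:ℝ) < 2)]
    rw [show ((ℓ:ℝ) - (L:ℝ))/2 + ((ℓ:ℝ) - (L:ℝ))/2 = (ℓ:ℝ) - (L:ℝ) by ring]
    rw [Real.rpow_sub (by norm_num : (0:ℝ) < 2), Real.rpow_natCast, Real.rpow_natCast]
  rw [Matrix.mul_apply]
  have hterm : ∀ j : Fin (2^ℓ), Pmat L ℓ i j * (Pmat L ℓ).transpose j m =
      ind ((j:ℕ) = a - 1) * ind ((j:ℕ) = b - 1) *
        ((2:ℝ)^ℓ/2^L * (ind (1≤a) * ind (1≤b) * ((1-t)*(1-s))))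
    + (ind ((j:ℕ) = a - 1) * ind ((j:ℕ) = b) * ((2:ℝ)^ℓ/2^L * (ind (1≤a) * ((1-t)*s)))
    + (ind ((j:ℕ) = a) * ind ((j:ℕ) = b - 1) * ((2:ℝ)^ℓ/2^L * (ind (1≤b) * (t*(1-s))))
    + ind ((j:ℕ) = a) * ind ((j:ℕ) = b) * ((2:ℝ)^ℓ/2^L * (t*s)))) := by
    intro j
    rw [Matrix.transpose_apply, Pmat_apply L ℓ hℓ i j, Pmat_apply L ℓ hℓ m j]
    rw [show ∀ C X Y : ℝ, (C * X) * (C * Y) = (C*C) * (X*Y) from fun C X Y => by ring]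
    rw [hC]
    ring
  rw [Finset.sum_congr rfl (fun j _ => hterm j)]
  rw [Finset.sum_add_distrib, Finset.sum_add_distrib, Finset.sum_add_distrib]
  rw [sum_delta2, sum_delta2, sum_delta2, sum_delta2]
  unfold Ff
  have e1 : ind (a-1 = b-1 ∧ a-1 < 2^ℓ) * ((2:ℝ)^ℓ/2^L * (ind (1≤a) * ind (1≤b) * ((1-t)*(1-s))))
      = (2:ℝ)^ℓ/2^L * (ind (a = b ∧ 1 ≤ a) * ((1-t)*(1-s))) := by
    by_cases h : a = b ∧ 1 ≤ a
    · rw [ind_true h, ind_true (show a-1 = b-1 ∧ a-1 < 2^ℓ by omega),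
        ind_true (show 1 ≤ a by omega), ind_true (show 1 ≤ b by omega)]
      ring
    · rw [ind_false h]
      by_cases h1 : a - 1 = b - 1 ∧ a - 1 < 2^ℓ
      · by_cases h2 : 1 ≤ a
        · rw [ind_false (show ¬ 1 ≤ b by omega)]; ring
        · rw [ind_false h2]; ring
      · rw [ind_false h1]; ring
  have e2 : ind (a-1 = b ∧ a-1 < 2^ℓ) * ((2:ℝ)^ℓ/2^L * (ind (1≤a) * ((1-t)*s)))
      = (2:ℝ)^ℓ/2^L * (ind (a = b + 1) * ((1-t)*s)) := by
    by_cases h : a = b + 1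
    · rw [ind_true h, ind_true (show a-1 = b ∧ a-1 < 2^ℓ by omega),
        ind_true (show 1 ≤ a by omega)]
      ring
    · rw [ind_false h]
      by_cases h1 : a - 1 = b ∧ a - 1 < 2^ℓ
      · rw [ind_false (show ¬ 1 ≤ a by omega)]; ring
      · rw [ind_false h1]; ring
  have e3 : ind (a = b-1 ∧ a < 2^ℓ) * ((2:ℝ)^ℓ/2^L * (ind (1≤b) * (t*(1-s))))
      = (2:ℝ)^ℓ/2^L * (ind (b = a + 1) * (t*(1-s))) := by
    by_cases h : b = a + 1
    · rw [ind_true h, ind_true (show a = b-1 ∧ a < 2^ℓ by omega),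
        ind_true (show 1 ≤ b by omega)]
      ring
    · rw [ind_false h]
      by_cases h1 : a = b - 1 ∧ a < 2^ℓ
      · rw [ind_false (show ¬ 1 ≤ b by omega)]; ring
      · rw [ind_false h1]; ring
  have e4 : ind (a = b ∧ a < 2^ℓ) * ((2:ℝ)^ℓ/2^L * (t*s))
      = (2:ℝ)^ℓ/2^L * (ind (a = b) * (t*s)) := by
    rw [ind_congr (show (a = b ∧ a < 2^ℓ) ↔ a = b by constructor <;> (intro h; first | exact h.1 | exact ⟨h, ha⟩))]
    ring
  rw [e1, e2, e3, e4]
  ring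


/-- The 8×8 TT core, as a `ℕ`-indexed function: states `0..3` are prefix relations
(`E₀`, `E`, `R`, `Lf`), states `4..7` are coefficients of `1, s, t, t*s`. -/
noncomputable def Wm (c x y : ℝ) : ℕ → ℕ → ℝ := fun k b =>
  if k = 0 then (if b = 0 then (1-x)*(1-y) else if b = 1 then x*y else if b = 2 then (1-x)*y else if b = 3 then x*(1-y) else if b = 4 then c*(x*y) else if b = 5 then c*(x-2*x*y) else if b = 6 then c*(y-2*x*y) else if b = 7 then c*(1-2*x-2*y+5*x*y) else 0)
  else
  if k = 1 then (if b = 0 then 0 else if b = 1 then (1-x)*(1-y)+x*y else if b = 2 then (1-x)*y else if b = 3 then x*(1-y) else if b = 4 then c*(1-x-y+2*x*y) else if b = 5 then c*(-1+2*x+y-3*x*y) else if b = 6 then c*(-1+x+2*y-3*x*y) else if b = 7 then c*(2-3*x-3*y+6*x*y) else 0)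
  else
  if k = 2 then (if b = 0 then 0 else if b = 1 then 0 else if b = 2 then x*(1-y) else if b = 3 then 0 else if b = 4 then 0 else if b = 5 then 0 else if b = 6 then c*(x*(1-y)) else if b = 7 then -(c*(x*(1-y))) else 0)
  else
  if k = 3 then (if b = 0 then 0 else if b = 1 then 0 else if b = 2 then 0 else if b = 3 then (1-x)*y else if b = 4 then 0 else if b = 5 then c*((1-x)*y) else if b = 6 then 0 else if b = 7 then -(c*((1-x)*y)) else 0)
  else
  if k = 4 then (if b = 0 then 0 else if b = 1 then 0 else if b = 2 then 0 else if b = 3 then 0 else if b = 4 then 1 else if b = 5 then 0 else if b = 6 then 0 else if b = 7 then 0 else 0)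
  else
  if k = 5 then (if b = 0 then 0 else if b = 1 then 0 else if b = 2 then 0 else if b = 3 then 0 else if b = 4 then y/2 else if b = 5 then 1/2 else if b = 6 then 0 else if b = 7 then 0 else 0)
  else
  if k = 6 then (if b = 0 then 0 else if b = 1 then 0 else if b = 2 then 0 else if b = 3 then 0 else if b = 4 then x/2 else if b = 5 then 0 else if b = 6 then 1/2 else if b = 7 then 0 else 0)
  else
  if k = 7 then (if b = 0 then 0 else if b = 1 then 0 else if b = 2 then 0 else if b = 3 then 0 else if b = 4 then x*y/4 else if b = 5 then x/4 else if b = 6 then y/4 else if b = 7 then 1/4 else 0)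
  else 0

noncomputable def w0 (δ : ℝ) (L : ℕ) : ℕ → ℝ := fun k =>
  if k = 0 then 1 else if k = 7 then muCoeff δ 0 / 2^L else 0

noncomputable def fv : ℕ → ℝ := fun k =>
  if k = 4 then 1 else if k = 5 then 1 else if k = 6 then 1 else if k = 7 then 1 else 0

noncomputable def coreE (δ : ℝ) (L j : ℕ) (x y : ℝ) (p q : ℕ) : ℝ :=
  if L = 1 then ∑ u : Fin 8, ∑ v : Fin 8, w0 δ L u * Wm (cc δ L 1) x y u v * fv v
  else if j = 0 then ∑ u : Fin 8, w0 δ L u * Wm (cc δ L 1) x y u q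
  else if j + 1 = L then ∑ v : Fin 8, Wm (cc δ L (j+1)) x y p v * fv v
  else Wm (cc δ L (j+1)) x y p q

def rkf (L : ℕ) : ℕ → ℕ := fun j => if j = 0 ∨ L ≤ j then 1 else 8

noncomputable def Vc (δ : ℝ) (L : ℕ) :
    ∀ j : ℕ, Fin 2 → Fin 2 → Matrix (Fin (rkf L j)) (Fin (rkf L (j+1))) ℝ :=
  fun j x y => Matrix.of fun a b => coreE δ L j ((x:ℕ):ℝ) ((y:ℕ):ℝ) (a:ℕ) (b:ℕ)

noncomputable def QQ (δ : ℝ) (L i m : ℕ) : ℕ → ℝ × ℝ × ℝ × ℝ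
  | 0 => (0, 0, 0, muCoeff δ 0 / 2^L)
  | n+1 =>
    (((QQ δ L i m n).1 + (QQ δ L i m n).2.1 * (dg L n m : ℝ) / 2
        + (QQ δ L i m n).2.2.1 * (dg L n i : ℝ) / 2
        + (QQ δ L i m n).2.2.2 * ((dg L n i : ℝ)*(dg L n m : ℝ)) / 4
        + cc δ L (n+1) * ind (Av L (n+1) i = Av L (n+1) m ∧ 1 ≤ Av L (n+1) i)),
     ((QQ δ L i m n).2.1 / 2 + (QQ δ L i m n).2.2.2 * (dg L n i : ℝ) / 4
        + cc δ L (n+1) * (ind (Av L (n+1) i = Av L (n+1) m + 1)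
            - ind (Av L (n+1) i = Av L (n+1) m ∧ 1 ≤ Av L (n+1) i))),
     ((QQ δ L i m n).2.2.1 / 2 + (QQ δ L i m n).2.2.2 * (dg L n m : ℝ) / 4
        + cc δ L (n+1) * (ind (Av L (n+1) m = Av L (n+1) i + 1)
            - ind (Av L (n+1) i = Av L (n+1) m ∧ 1 ≤ Av L (n+1) i))),
     ((QQ δ L i m n).2.2.2 / 4
        + cc δ L (n+1) * (ind (Av L (n+1) i = Av L (n+1) m ∧ 1 ≤ Av L (n+1) i)
            - ind (Av L (n+1) i = Av L (n+1) m + 1) - ind (Av L (n+1) m = Av L (n+1) i + 1)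
            + ind (Av L (n+1) i = Av L (n+1) m))))

noncomputable def sV (δ : ℝ) (L i m n : ℕ) : ℕ → ℝ := fun k =>
  if k = 0 then ind (Av L n i = 0 ∧ Av L n m = 0)
  else if k = 1 then ind (Av L n i = Av L n m ∧ 1 ≤ Av L n i)
  else if k = 2 then ind (Av L n m = Av L n i + 1)
  else if k = 3 then ind (Av L n i = Av L n m + 1)
  else if k = 4 then (QQ δ L i m n).1
  else if k = 5 then (QQ δ L i m n).2.1
  else if k = 6 then (QQ δ L i m n).2.2.1
  else if k = 7 then (QQ δ L i m n).2.2.2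
  else 0

section gens
variable (A B A' B' x y : ℕ)

lemma gen0 (hx : x < 2) (hy : y < 2) (hA : A' = 2*A + x) (hB : B' = 2*B + y) :
    ind (A = 0 ∧ B = 0) * ((1-(x:ℝ))*(1-(y:ℝ))) = ind (A' = 0 ∧ B' = 0) := by
  subst hA hB
  interval_cases x <;> interval_cases y <;> unfold ind <;>
    simp only [Nat.cast_zero, Nat.cast_one] <;>
    split_ifs <;> first | ring1 | (exfalso; omega) | (exfalso; simp_all)

lemma gen1 (hx : x < 2) (hy : y < 2) (hA : A' = 2*A + x) (hB : B' = 2*B + y) :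
    ind (A = 0 ∧ B = 0) * ((x:ℝ)*(y:ℝ))
      + ind (A = B ∧ 1 ≤ A) * ((1-(x:ℝ))*(1-(y:ℝ))+(x:ℝ)*(y:ℝ))
      = ind (A' = B' ∧ 1 ≤ A') := by
  subst hA hB
  interval_cases x <;> interval_cases y <;> unfold ind <;>
    simp only [Nat.cast_zero, Nat.cast_one] <;>
    split_ifs <;> first | ring1 | (exfalso; omega) | (exfalso; simp_all)

lemma gen2 (hx : x < 2) (hy : y < 2) (hA : A' = 2*A + x) (hB : B' = 2*B + y) :
    ind (A = 0 ∧ B = 0) * ((1-(x:ℝ))*(y:ℝ)) + ind (A = B ∧ 1 ≤ A) * ((1-(x:ℝ))*(y:ℝ))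
      + ind (B = A + 1) * ((x:ℝ)*(1-(y:ℝ)))
      = ind (B' = A' + 1) := by
  subst hA hB
  interval_cases x <;> interval_cases y <;> unfold ind <;>
    simp only [Nat.cast_zero, Nat.cast_one] <;>
    split_ifs <;> first | ring1 | (exfalso; omega) | (exfalso; simp_all)

lemma gen3 (hx : x < 2) (hy : y < 2) (hA : A' = 2*A + x) (hB : B' = 2*B + y) :
    ind (A = 0 ∧ B = 0) * ((x:ℝ)*(1-(y:ℝ))) + ind (A = B ∧ 1 ≤ A) * ((x:ℝ)*(1-(y:ℝ)))
      + ind (A = B + 1) * ((1-(x:ℝ))*(y:ℝ))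
      = ind (A' = B' + 1) := by
  subst hA hB
  interval_cases x <;> interval_cases y <;> unfold ind <;>
    simp only [Nat.cast_zero, Nat.cast_one] <;>
    split_ifs <;> first | ring1 | (exfalso; omega) | (exfalso; simp_all)

lemma gen4 (hx : x < 2) (hy : y < 2) (hA : A' = 2*A + x) (hB : B' = 2*B + y) :
    ind (A = 0 ∧ B = 0) * ((x:ℝ)*(y:ℝ))
      + ind (A = B ∧ 1 ≤ A) * (1-(x:ℝ)-(y:ℝ)+2*(x:ℝ)*(y:ℝ))
      = ind (A' = B' ∧ 1 ≤ A') := by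
  subst hA hB
  interval_cases x <;> interval_cases y <;> unfold ind <;>
    simp only [Nat.cast_zero, Nat.cast_one] <;>
    split_ifs <;> first | ring1 | (exfalso; omega) | (exfalso; simp_all)

lemma gen5 (hx : x < 2) (hy : y < 2) (hA : A' = 2*A + x) (hB : B' = 2*B + y) :
    ind (A = 0 ∧ B = 0) * ((x:ℝ)-2*(x:ℝ)*(y:ℝ))
      + ind (A = B ∧ 1 ≤ A) * (-1+2*(x:ℝ)+(y:ℝ)-3*(x:ℝ)*(y:ℝ))
      + ind (A = B + 1) * ((1-(x:ℝ))*(y:ℝ))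
      = ind (A' = B' + 1) - ind (A' = B' ∧ 1 ≤ A') := by
  subst hA hB
  interval_cases x <;> interval_cases y <;> unfold ind <;>
    simp only [Nat.cast_zero, Nat.cast_one] <;>
    split_ifs <;> first | ring1 | (exfalso; omega) | (exfalso; simp_all)

lemma gen6 (hx : x < 2) (hy : y < 2) (hA : A' = 2*A + x) (hB : B' = 2*B + y) :
    ind (A = 0 ∧ B = 0) * ((y:ℝ)-2*(x:ℝ)*(y:ℝ))
      + ind (A = B ∧ 1 ≤ A) * (-1+(x:ℝ)+2*(y:ℝ)-3*(x:ℝ)*(y:ℝ))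
      + ind (B = A + 1) * ((x:ℝ)*(1-(y:ℝ)))
      = ind (B' = A' + 1) - ind (A' = B' ∧ 1 ≤ A') := by
  subst hA hB
  interval_cases x <;> interval_cases y <;> unfold ind <;>
    simp only [Nat.cast_zero, Nat.cast_one] <;>
    split_ifs <;> first | ring1 | (exfalso; omega) | (exfalso; simp_all)

set_option maxHeartbeats 1000000 in
lemma gen7 (hx : x < 2) (hy : y < 2) (hA : A' = 2*A + x) (hB : B' = 2*B + y) :
    ind (A = 0 ∧ B = 0) * (1-2*(x:ℝ)-2*(y:ℝ)+5*(x:ℝ)*(y:ℝ))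
      + ind (A = B ∧ 1 ≤ A) * (2-3*(x:ℝ)-3*(y:ℝ)+6*(x:ℝ)*(y:ℝ))
      + ind (B = A + 1) * (-((x:ℝ)*(1-(y:ℝ))))
      + ind (A = B + 1) * (-((1-(x:ℝ))*(y:ℝ)))
      = ind (A' = B' ∧ 1 ≤ A') - ind (A' = B' + 1) - ind (B' = A' + 1) + ind (A' = B') := by
  subst hA hB
  interval_cases x <;> interval_cases y <;> unfold ind <;>
    simp only [Nat.cast_zero, Nat.cast_one] <;>
    split_ifs <;> first | ring1 | (exfalso; omega) | (exfalso; simp_all)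

end gens

lemma fin8c : ((0:Fin 8):ℕ) = 0 ∧ ((1:Fin 8):ℕ) = 1 ∧ ((2:Fin 8):ℕ) = 2 ∧ ((3:Fin 8):ℕ) = 3
    ∧ ((4:Fin 8):ℕ) = 4 ∧ ((5:Fin 8):ℕ) = 5 ∧ ((6:Fin 8):ℕ) = 6 ∧ ((7:Fin 8):ℕ) = 7 :=
  ⟨rfl, rfl, rfl, rfl, rfl, rfl, rfl, rfl⟩

set_option maxHeartbeats 1000000 in
/-- The key one-step invariant propagation. -/
lemma sV_step (δ : ℝ) (L i m n : ℕ) (hn : n < L) (b : Fin 8) :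
    (∑ k : Fin 8, sV δ L i m n (k:ℕ) *
        Wm (cc δ L (n+1)) ((dg L n i : ℕ):ℝ) ((dg L n m : ℕ):ℝ) (k:ℕ) (b:ℕ))
      = sV δ L i m (n+1) (b:ℕ) := by
  have hA := Av_succ L n i hn
  have hB := Av_succ L n m hn
  have hx := dg_lt L n i
  have hy := dg_lt L n m
  rw [Fin.sum_univ_eight]
  fin_cases b <;>
    simp [fin8c.1, fin8c.2.1, fin8c.2.2.1, fin8c.2.2.2.1, fin8c.2.2.2.2.1,
      fin8c.2.2.2.2.2.1, fin8c.2.2.2.2.2.2.1, fin8c.2.2.2.2.2.2.2, sV, Wm, QQ]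
  · linear_combination gen0 (Av L n i) (Av L n m) (Av L (n+1) i) (Av L (n+1) m)
      (dg L n i) (dg L n m) hx hy hA hB
  · linear_combination gen1 (Av L n i) (Av L n m) (Av L (n+1) i) (Av L (n+1) m)
      (dg L n i) (dg L n m) hx hy hA hB
  · linear_combination gen2 (Av L n i) (Av L n m) (Av L (n+1) i) (Av L (n+1) m)
      (dg L n i) (dg L n m) hx hy hA hB
  · linear_combination gen3 (Av L n i) (Av L n m) (Av L (n+1) i) (Av L (n+1) m)
      (dg L n i) (dg L n m) hx hy hA hB
  · linear_combination (cc δ L (n+1)) * gen4 (Av L n i) (Av L n m) (Av L (n+1) i) (Av L (n+1) m)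
      (dg L n i) (dg L n m) hx hy hA hB
  · linear_combination (cc δ L (n+1)) * gen5 (Av L n i) (Av L n m) (Av L (n+1) i) (Av L (n+1) m)
      (dg L n i) (dg L n m) hx hy hA hB
  · linear_combination (cc δ L (n+1)) * gen6 (Av L n i) (Av L n m) (Av L (n+1) i) (Av L (n+1) m)
      (dg L n i) (dg L n m) hx hy hA hB
  · linear_combination (cc δ L (n+1)) * gen7 (Av L n i) (Av L n m) (Av L (n+1) i) (Av L (n+1) m)
      (dg L n i) (dg L n m) hx hy hA hB

lemma sum_Ff (δ : ℝ) (L i m : ℕ) (hi : i < 2^L) (hm : m < 2^L) :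
    ∀ n, n ≤ L → ∑ ℓ ∈ Finset.range (n+1), cc δ L ℓ * Ff L ℓ i m
      = (QQ δ L i m n).1 + (QQ δ L i m n).2.1 * Tv L n m
        + (QQ δ L i m n).2.2.1 * Tv L n i + (QQ δ L i m n).2.2.2 * (Tv L n i * Tv L n m) := by
  intro n
  induction n with
  | zero =>
    intro _
    rw [Finset.sum_range_one]
    have h0i : Av L 0 i = 0 := Av_zero L i hi
    have h0m : Av L 0 m = 0 := Av_zero L m hm
    unfold Ff cc
    rw [h0i, h0m, ind_false (by omega : ¬((0:ℕ) = 0 ∧ 1 ≤ (0:ℕ))),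
      ind_false (by omega : ¬((0:ℕ) = 0 + 1)), ind_true rfl]
    simp only [QQ]
    rw [pow_zero]
    ring
  | succ n ih =>
    intro hn1
    rw [Finset.sum_range_succ, ih (by omega)]
    rw [Tv_succ L n i (by omega), Tv_succ L n m (by omega)]
    simp only [QQ]
    unfold Ff
    ring

lemma w0_eq_sV0 (δ : ℝ) (L i m : ℕ) (hi : i < 2^L) (hm : m < 2^L) (k : Fin 8) :
    w0 δ L (k:ℕ) = sV δ L i m 0 (k:ℕ) := by
  have h0i : Av L 0 i = 0 := Av_zero L i hi
  have h0m : Av L 0 m = 0 := Av_zero L m hm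
  fin_cases k <;>
    simp [fin8c.1, fin8c.2.1, fin8c.2.2.1, fin8c.2.2.2.1, fin8c.2.2.2.2.1,
      fin8c.2.2.2.2.2.1, fin8c.2.2.2.2.2.2.1, fin8c.2.2.2.2.2.2.2, sV, w0, QQ, h0i, h0m, ind]

lemma final_sum (δ : ℝ) (L i m : ℕ) (hi : i < 2^L) (hm : m < 2^L) :
    ∑ v : Fin 8, sV δ L i m L (v:ℕ) * fv (v:ℕ)
      = ∑ ℓ ∈ Finset.range (L+1), cc δ L ℓ * Ff L ℓ i m := by
  rw [Fin.sum_univ_eight, sum_Ff δ L i m hi hm L le_rfl, Tv_last, Tv_last]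
  simp only [fin8c.1, fin8c.2.1, fin8c.2.2.1, fin8c.2.2.2.1, fin8c.2.2.2.2.1,
    fin8c.2.2.2.2.2.1, fin8c.2.2.2.2.2.2.1, fin8c.2.2.2.2.2.2.2]
  norm_num [sV, fv]
  try ring

def pb (L i : ℕ) (n : ℕ) : Fin n → Fin 2 := fun j => ⟨dg L (j:ℕ) i, dg_lt L _ i⟩

lemma pb_eq_bits (L i : ℕ) : bits L i = pb L i L := rfl

lemma rkf_mid (L n : ℕ) (h1 : 0 < n) (h2 : n < L) : rkf L n = 8 := by
  unfold rkf
  rw [if_neg (by omega)]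

/-- The invariant: after `n` cores the row vector equals `sV n`. -/
lemma inv_lemma (δ : ℝ) (L i m : ℕ) (hi : i < 2^L) (hm : m < 2^L) :
    ∀ n, 1 ≤ n → n < L → ∀ (a : Fin (rkf L 0)) (b : Fin (rkf L n)),
      qttEntryM (Vc δ L) n (pb L i n) (pb L m n) a b = sV δ L i m n (b:ℕ) := by
  intro n h1
  induction n, h1 using Nat.le_induction with
  | base =>
    intro h2 a b
    rw [show qttEntryM (Vc δ L) 1 (pb L i 1) (pb L m 1)
        = (1 : Matrix (Fin (rkf L 0)) (Fin (rkf L 0)) ℝ)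
            * Vc δ L 0 (pb L i 1 (Fin.last 0)) (pb L m 1 (Fin.last 0)) from rfl,
      Matrix.one_mul]
    have h8 : rkf L 1 = 8 := rkf_mid L 1 one_pos h2
    show coreE δ L 0 (((pb L i 1 (Fin.last 0) : Fin 2):ℕ):ℝ)
        (((pb L m 1 (Fin.last 0) : Fin 2):ℕ):ℝ) (a:ℕ) (b:ℕ) = _
    unfold coreE
    rw [if_neg (by omega), if_pos rfl]
    have hx : (((pb L i 1 (Fin.last 0) : Fin 2):ℕ):ℝ) = ((dg L 0 i : ℕ):ℝ) := rfl
    have hy : (((pb L m 1 (Fin.last 0) : Fin 2):ℕ):ℝ) = ((dg L 0 m : ℕ):ℝ) := rfl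
    rw [hx, hy]
    have e1 : (∑ u : Fin 8, w0 δ L (u:ℕ)
          * Wm (cc δ L 1) ((dg L 0 i : ℕ):ℝ) ((dg L 0 m : ℕ):ℝ) (u:ℕ) (b:ℕ))
        = ∑ u : Fin 8, sV δ L i m 0 (u:ℕ)
          * Wm (cc δ L 1) ((dg L 0 i : ℕ):ℝ) ((dg L 0 m : ℕ):ℝ) (u:ℕ) (b:ℕ) :=
      Finset.sum_congr rfl (fun u _ => by rw [w0_eq_sV0 δ L i m hi hm u])
    rw [e1]
    have hb8 : (b:ℕ) = ((Fin.cast h8 b : Fin 8):ℕ) := rfl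
    rw [hb8]
    exact sV_step δ L i m 0 (by omega) (Fin.cast h8 b)
  | succ n hn ih =>
    intro h2 a b
    rw [show qttEntryM (Vc δ L) (n+1) (pb L i (n+1)) (pb L m (n+1))
        = qttEntryM (Vc δ L) n (pb L i n) (pb L m n)
          * Vc δ L n (pb L i (n+1) (Fin.last n)) (pb L m (n+1) (Fin.last n)) from rfl]
    rw [Matrix.mul_apply]
    have h8 : rkf L n = 8 := rkf_mid L n (by omega) (by omega)
    have h8' : rkf L (n+1) = 8 := rkf_mid L (n+1) (by omega) h2
    have hstep : ∀ k : Fin (rkf L n),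
        qttEntryM (Vc δ L) n (pb L i n) (pb L m n) a k
          * Vc δ L n (pb L i (n+1) (Fin.last n)) (pb L m (n+1) (Fin.last n)) k b
        = sV δ L i m n (k:ℕ) * Wm (cc δ L (n+1)) ((dg L n i : ℕ):ℝ) ((dg L n m : ℕ):ℝ)
            (k:ℕ) (b:ℕ) := by
      intro k
      rw [ih (by omega) a k]
      congr 1
      show coreE δ L n (((pb L i (n+1) (Fin.last n) : Fin 2):ℕ):ℝ)
          (((pb L m (n+1) (Fin.last n) : Fin 2):ℕ):ℝ) (k:ℕ) (b:ℕ) = _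
      unfold coreE
      rw [if_neg (by omega), if_neg (by omega), if_neg (by omega)]
      rfl
    have e1 : (∑ k : Fin (rkf L n), qttEntryM (Vc δ L) n (pb L i n) (pb L m n) a k
          * Vc δ L n (pb L i (n+1) (Fin.last n)) (pb L m (n+1) (Fin.last n)) k b)
        = ∑ k : Fin 8, sV δ L i m n (k:ℕ)
          * Wm (cc δ L (n+1)) ((dg L n i : ℕ):ℝ) ((dg L n m : ℕ):ℝ) (k:ℕ) (b:ℕ) := by
      rw [Finset.sum_congr rfl (fun k _ => hstep k)]
      exact Fintype.sum_equiv (finCongr h8) _ _ (fun k => rfl)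
    rw [e1]
    have hb8 : (b:ℕ) = ((Fin.cast h8' b : Fin 8):ℕ) := rfl
    rw [hb8]
    exact sV_step δ L i m n (by omega) (Fin.cast h8' b)

lemma entry_eq (δ : ℝ) (L : ℕ) (hL : 0 < L) (i m : Fin (2^L)) (a : Fin (rkf L 0))
    (b : Fin (rkf L L)) :
    precondC δ L i m = qttEntryM (Vc δ L) L (bits L (i:ℕ)) (bits L (m:ℕ)) a b := by
  have lhs : precondC δ L i m = ∑ ℓ ∈ Finset.range (L+1), cc δ L ℓ * Ff L ℓ (i:ℕ) (m:ℕ) := by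
    unfold precondC
    rw [Matrix.sum_apply]
    refine Finset.sum_congr rfl (fun ℓ hℓ => ?_)
    have hℓL : ℓ ≤ L := by
      have := Finset.mem_range.1 hℓ; omega
    rw [Matrix.smul_apply, PPT L ℓ hℓL i m, smul_eq_mul]
    unfold cc
    ring
  rw [lhs, pb_eq_bits L (i:ℕ), pb_eq_bits L (m:ℕ)]
  obtain ⟨n, rfl⟩ : ∃ n, L = n + 1 := ⟨L - 1, by omega⟩
  rcases Nat.eq_zero_or_pos n with rfl | hn
  · -- L = 1
    have hi1 : (i:ℕ) < 2^1 := i.isLt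
    have hm1 : (m:ℕ) < 2^1 := m.isLt
    rw [show qttEntryM (Vc δ 1) 1 (pb 1 (i:ℕ) 1) (pb 1 (m:ℕ) 1)
        = (1 : Matrix (Fin (rkf 1 0)) (Fin (rkf 1 0)) ℝ)
            * Vc δ 1 0 (pb 1 (i:ℕ) 1 (Fin.last 0)) (pb 1 (m:ℕ) 1 (Fin.last 0)) from rfl,
      Matrix.one_mul]
    rw [show Vc δ 1 0 (pb 1 (i:ℕ) 1 (Fin.last 0)) (pb 1 (m:ℕ) 1 (Fin.last 0)) a b
        = coreE δ 1 0 (((pb 1 (i:ℕ) 1 (Fin.last 0) : Fin 2):ℕ):ℝ)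
            (((pb 1 (m:ℕ) 1 (Fin.last 0) : Fin 2):ℕ):ℝ) (a:ℕ) (b:ℕ) from rfl]
    unfold coreE
    rw [if_pos rfl]
    have hx : (((pb 1 (i:ℕ) 1 (Fin.last 0) : Fin 2):ℕ):ℝ) = ((dg 1 0 (i:ℕ) : ℕ):ℝ) := rfl
    have hy : (((pb 1 (m:ℕ) 1 (Fin.last 0) : Fin 2):ℕ):ℝ) = ((dg 1 0 (m:ℕ) : ℕ):ℝ) := rfl
    rw [hx, hy]
    have e1 : ∀ v : Fin 8, (∑ u : Fin 8, w0 δ 1 (u:ℕ)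
          * Wm (cc δ 1 1) ((dg 1 0 (i:ℕ):ℕ):ℝ) ((dg 1 0 (m:ℕ):ℕ):ℝ) (u:ℕ) (v:ℕ))
        = sV δ 1 (i:ℕ) (m:ℕ) 1 (v:ℕ) := by
      intro v
      rw [← sV_step δ 1 (i:ℕ) (m:ℕ) 0 one_pos v]
      exact Finset.sum_congr rfl (fun u _ => by rw [w0_eq_sV0 δ 1 (i:ℕ) (m:ℕ) hi1 hm1 u])
    have e2 : (∑ u : Fin 8, ∑ v : Fin 8, w0 δ 1 (u:ℕ)
          * Wm (cc δ 1 1) ((dg 1 0 (i:ℕ):ℕ):ℝ) ((dg 1 0 (m:ℕ):ℕ):ℝ) (u:ℕ) (v:ℕ) * fv (v:ℕ))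
        = ∑ v : Fin 8, sV δ 1 (i:ℕ) (m:ℕ) 1 (v:ℕ) * fv (v:ℕ) := by
      rw [Finset.sum_comm]
      exact Finset.sum_congr rfl (fun v _ => by rw [← Finset.sum_mul, e1 v])
    rw [e2]
    exact (final_sum δ 1 (i:ℕ) (m:ℕ) hi1 hm1).symm
  · -- L = n+1, n ≥ 1
    have h8 : rkf (n+1) n = 8 := rkf_mid (n+1) n hn (by omega)
    have hiL : (i:ℕ) < 2^(n+1) := i.isLt
    have hmL : (m:ℕ) < 2^(n+1) := m.isLt
    rw [show qttEntryM (Vc δ (n+1)) (n+1) (pb (n+1) (i:ℕ) (n+1)) (pb (n+1) (m:ℕ) (n+1))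
        = qttEntryM (Vc δ (n+1)) n (pb (n+1) (i:ℕ) n) (pb (n+1) (m:ℕ) n)
          * Vc δ (n+1) n (pb (n+1) (i:ℕ) (n+1) (Fin.last n)) (pb (n+1) (m:ℕ) (n+1) (Fin.last n))
        from rfl]
    rw [Matrix.mul_apply]
    have hstep : ∀ k : Fin (rkf (n+1) n),
        qttEntryM (Vc δ (n+1)) n (pb (n+1) (i:ℕ) n) (pb (n+1) (m:ℕ) n) a k
          * Vc δ (n+1) n (pb (n+1) (i:ℕ) (n+1) (Fin.last n)) (pb (n+1) (m:ℕ) (n+1) (Fin.last n)) k b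
        = ∑ v : Fin 8, sV δ (n+1) (i:ℕ) (m:ℕ) n (k:ℕ)
            * Wm (cc δ (n+1) (n+1)) ((dg (n+1) n (i:ℕ) : ℕ):ℝ) ((dg (n+1) n (m:ℕ) : ℕ):ℝ)
              (k:ℕ) (v:ℕ) * fv (v:ℕ) := by
      intro k
      rw [inv_lemma δ (n+1) (i:ℕ) (m:ℕ) hiL hmL n hn (by omega) a k]
      rw [show Vc δ (n+1) n (pb (n+1) (i:ℕ) (n+1) (Fin.last n))
            (pb (n+1) (m:ℕ) (n+1) (Fin.last n)) k b
          = coreE δ (n+1) n (((pb (n+1) (i:ℕ) (n+1) (Fin.last n) : Fin 2):ℕ):ℝ)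
              (((pb (n+1) (m:ℕ) (n+1) (Fin.last n) : Fin 2):ℕ):ℝ) (k:ℕ) (b:ℕ) from rfl]
      unfold coreE
      rw [if_neg (by omega), if_neg (by omega), if_pos rfl]
      have hx : (((pb (n+1) (i:ℕ) (n+1) (Fin.last n) : Fin 2):ℕ):ℝ)
          = ((dg (n+1) n (i:ℕ) : ℕ):ℝ) := rfl
      have hy : (((pb (n+1) (m:ℕ) (n+1) (Fin.last n) : Fin 2):ℕ):ℝ)
          = ((dg (n+1) n (m:ℕ) : ℕ):ℝ) := rfl
      rw [hx, hy, Finset.mul_sum]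
      exact Finset.sum_congr rfl fun v _ => by ring
    have e2 : (∑ k : Fin (rkf (n+1) n),
          qttEntryM (Vc δ (n+1)) n (pb (n+1) (i:ℕ) n) (pb (n+1) (m:ℕ) n) a k
          * Vc δ (n+1) n (pb (n+1) (i:ℕ) (n+1) (Fin.last n)) (pb (n+1) (m:ℕ) (n+1) (Fin.last n)) k b)
        = ∑ v : Fin 8, sV δ (n+1) (i:ℕ) (m:ℕ) (n+1) (v:ℕ) * fv (v:ℕ) := by
      rw [Finset.sum_congr rfl (fun k _ => hstep k), Finset.sum_comm]
      refine Finset.sum_congr rfl (fun v _ => ?_)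
      have e3 : (∑ k : Fin (rkf (n+1) n), sV δ (n+1) (i:ℕ) (m:ℕ) n (k:ℕ)
            * Wm (cc δ (n+1) (n+1)) ((dg (n+1) n (i:ℕ) : ℕ):ℝ) ((dg (n+1) n (m:ℕ) : ℕ):ℝ)
              (k:ℕ) (v:ℕ) * fv (v:ℕ))
          = (∑ k : Fin 8, sV δ (n+1) (i:ℕ) (m:ℕ) n (k:ℕ)
            * Wm (cc δ (n+1) (n+1)) ((dg (n+1) n (i:ℕ) : ℕ):ℝ) ((dg (n+1) n (m:ℕ) : ℕ):ℝ)
              (k:ℕ) (v:ℕ)) * fv (v:ℕ) := by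
        rw [Finset.sum_mul]
        exact Fintype.sum_equiv (finCongr h8) _ _ (fun k => rfl)
      rw [e3, sV_step δ (n+1) (i:ℕ) (m:ℕ) n (by omega) v]
    rw [e2]
    exact (final_sum δ (n+1) (i:ℕ) (m:ℕ) hiL hmL).symm

end Stmt18aux

/-- QTT representation of the modified BPX preconditioner:
for `0 < δ < 1` and `L ∈ ℕ`, the preconditioner `C_L = Σ_{ℓ=0}^L μ_{ℓ,δ} P_{ℓ,L}P_{ℓ,L}ᵀ`
admits a matrix QTT decomposition with all (intermediate) ranks equal to `8`. -/
theorem stmt18 (δ : ℝ) (hδ0 : 0 < δ) (hδ1 : δ < 1) (L : ℕ) (hL : 0 < L) :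
    ∃ rk : ℕ → ℕ, (∀ j : ℕ, 0 < j → j < L → rk j = 8) ∧
      HasMatrixQTTRanks L (precondC δ L) rk := by
  refine ⟨Stmt18aux.rkf L, fun j hj0 hjL => Stmt18aux.rkf_mid L j hj0 hjL,
    if_pos (Or.inl rfl), if_pos (Or.inr le_rfl), Stmt18aux.Vc δ L,
    fun i m a b => Stmt18aux.entry_eq δ L hL i m a b⟩
end
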